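/- arXiv:2503.10524 — 7 statements merged into one kernel-verified Lean document; each statement's English description precedes it below -/
import Mathlib

section
/- Let 𝒜 be an abelian category, let B be a Serre subcategory of 𝒜, and let (C_i)_{i ∈ I} be a family of Serre subcategories of 𝒜 indexed by a set I. Then B ∩ ⟨⋃_{i ∈ I} C_i⟩ = ⟨⋃_{i ∈ I} (B ∩ C_i)⟩, where ⟨T⟩ denotes the smallest Serre subcategory of 𝒜 containing the class of objects T. (This is the infinite distributive law making the partially ordered set of Serre subcategories of 𝒜, ordered by inclusion, with meets given by intersection and joins given by the generated Serre subcategory, into a frame.) -/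
open CategoryTheory

/-- A Serre subcategory of an abelian category `𝒜`, viewed as a class of objects: closed under
isomorphism, containing the zero objects, and such that for every short exact sequence
`0 → A → B → C → 0` the middle object belongs to the class iff both outer objects do. -/
def IsSerreSubcategory {𝒜 : Type*} [Category 𝒜] [Abelian 𝒜] (S : Set 𝒜) : Prop :=
  (∀ X Y : 𝒜, (X ≅ Y) → X ∈ S → Y ∈ S) ∧
  (∀ X : 𝒜, Limits.IsZero X → X ∈ S) ∧
  (∀ C : ShortComplex 𝒜, C.ShortExact → (C.X₂ ∈ S ↔ C.X₁ ∈ S ∧ C.X₃ ∈ S))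

/-- The Serre subcategory generated by a class of objects `T`: the intersection of all Serre
subcategories containing `T`. -/
def serreGenerated {𝒜 : Type*} [Category 𝒜] [Abelian 𝒜] (T : Set 𝒜) : Set 𝒜 :=
  ⋂₀ {S : Set 𝒜 | IsSerreSubcategory S ∧ T ⊆ S}

section Aux

open CategoryTheory.Limits

set_option linter.unusedSectionVars false

variable {𝒜 : Type*} [Category 𝒜] [Abelian 𝒜]

/-- `Subq X Y` : `Y` is a subquotient of `X`. -/
def Subq (X Y : 𝒜) : Prop :=
  ∃ (W : 𝒜) (i : W ⟶ X) (p : W ⟶ Y), Mono i ∧ Epi p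

lemma subq_refl (X : 𝒜) : Subq X X :=
  ⟨X, 𝟙 X, 𝟙 X, inferInstance, inferInstance⟩

lemma subq_of_mono {X Y : 𝒜} (i : Y ⟶ X) [Mono i] : Subq X Y :=
  ⟨Y, i, 𝟙 Y, inferInstance, inferInstance⟩

lemma subq_of_epi {X Y : 𝒜} (p : X ⟶ Y) [Epi p] : Subq X Y :=
  ⟨X, 𝟙 X, p, inferInstance, inferInstance⟩

lemma subq_trans {X Y Z : 𝒜} (h₁ : Subq X Y) (h₂ : Subq Y Z) : Subq X Z := by
  obtain ⟨W, i, p, hi, hp⟩ := h₁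
  obtain ⟨V, j, q, hj, hq⟩ := h₂
  exact ⟨pullback p j, pullback.fst p j ≫ i, pullback.snd p j ≫ q, mono_comp _ _, epi_comp _ _⟩

lemma subq_isZero {X Y : 𝒜} (h : Subq X Y) (hX : IsZero X) : IsZero Y := by
  obtain ⟨W, i, p, hi, hp⟩ := h
  exact (hX.of_mono i).of_epi p

lemma shortExact_of_mono {A X : 𝒜} (i : A ⟶ X) [Mono i] :
    (ShortComplex.mk i (cokernel.π i) (cokernel.condition i)).ShortExact where
  exact := ShortComplex.exact_of_g_is_cokernel _ (cokernelIsCokernel i)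

lemma shortExact_of_epi {X Y : 𝒜} (p : X ⟶ Y) [Epi p] :
    (ShortComplex.mk (kernel.ι p) p (kernel.condition p)).ShortExact where
  exact := ShortComplex.exact_of_f_is_kernel _ (kernelIsKernel p)

lemma mem_of_subq {S : Set 𝒜} (hS : IsSerreSubcategory S) {X Y : 𝒜}
    (h : Subq X Y) (hX : X ∈ S) : Y ∈ S := by
  obtain ⟨W, i, p, hi, hp⟩ := h
  have hW : W ∈ S := ((hS.2.2 _ (shortExact_of_mono i)).1 hX).1
  exact ((hS.2.2 _ (shortExact_of_epi p)).1 hW).2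

/-- Key decomposition: a subquotient of the middle term of a short exact sequence fits into a
short exact sequence whose outer terms are subquotients of the outer terms (and of `Y`). -/
lemma subq_decomp {S : ShortComplex 𝒜} (hS : S.ShortExact) {Y : 𝒜} (hY : Subq S.X₂ Y) :
    ∃ T : ShortComplex 𝒜, T.ShortExact ∧ T.X₂ = Y ∧
      Subq S.X₁ T.X₁ ∧ Subq S.X₃ T.X₃ ∧ Subq Y T.X₁ ∧ Subq Y T.X₃ := by
  obtain ⟨W, i, p, hi, hp⟩ := hY
  have := hS.mono_f
  have := hS.epi_g
  -- P = W ∩ X₁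
  let P := pullback i S.f
  let h' : P ⟶ Y := pullback.fst i S.f ≫ p
  let Y₁ := Abelian.image h'
  let ι₁ : Y₁ ⟶ Y := Abelian.image.ι h'
  let T : ShortComplex 𝒜 := ShortComplex.mk ι₁ (cokernel.π ι₁) (cokernel.condition ι₁)
  have hT : T.ShortExact := shortExact_of_mono ι₁
  refine ⟨T, hT, rfl, ?_, ?_, ?_, ?_⟩
  · -- Y₁ is a subquotient of S.X₁
    exact ⟨P, pullback.snd i S.f, Abelian.factorThruImage h', inferInstance, inferInstance⟩
  · -- T.X₃ = coker ι₁ is a subquotient of S.X₃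
    let q : W ⟶ S.X₃ := i ≫ S.g
    have w : kernel.ι q ≫ p ≫ cokernel.π ι₁ = 0 := by
      have hq : (kernel.ι q ≫ i) ≫ S.g = 0 := by
        rw [Category.assoc]; exact kernel.condition q
      obtain ⟨l, hl⟩ := KernelFork.IsLimit.lift' hS.fIsKernel (kernel.ι q ≫ i) hq
      have hm : kernel.ι q ≫ i = l ≫ S.f := hl.symm
      let m : kernel q ⟶ P := pullback.lift (kernel.ι q) l hm
      have hm1 : m ≫ pullback.fst i S.f = kernel.ι q := pullback.lift_fst _ _ _
      calc kernel.ι q ≫ p ≫ cokernel.π ι₁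
          = m ≫ (pullback.fst i S.f ≫ p) ≫ cokernel.π ι₁ := by
            rw [← hm1]; simp [Category.assoc]
        _ = m ≫ (Abelian.factorThruImage h' ≫ ι₁) ≫ cokernel.π ι₁ := by
            rw [Abelian.image.fac]
        _ = 0 := by
            simp
    let e : Abelian.coimage q ⟶ cokernel ι₁ := cokernel.desc (kernel.ι q) (p ≫ cokernel.π ι₁) w
    have he : Abelian.coimage.π q ≫ e = p ≫ cokernel.π ι₁ := cokernel.π_desc _ _ _
    have : Epi e := by
      have : Epi (p ≫ cokernel.π ι₁) := epi_comp _ _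
      exact epi_of_epi_fac he
    exact ⟨Abelian.coimage q, Abelian.factorThruCoimage q, e, inferInstance, this⟩
  · exact subq_of_mono ι₁
  · exact subq_of_epi (cokernel.π ι₁)

lemma isSerre_serreGenerated (T : Set 𝒜) : IsSerreSubcategory (serreGenerated T) := by
  refine ⟨?_, ?_, ?_⟩
  · intro X Y e hX
    intro S hS
    exact hS.1.1 X Y e (hX S hS)
  · intro X hX S hS
    exact hS.1.2.1 X hX
  · intro Cx hCx
    constructor
    · intro h
      exact ⟨fun S hS => ((hS.1.2.2 Cx hCx).1 (h S hS)).1,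
        fun S hS => ((hS.1.2.2 Cx hCx).1 (h S hS)).2⟩
    · intro ⟨h1, h3⟩ S hS
      exact (hS.1.2.2 Cx hCx).2 ⟨h1 S hS, h3 S hS⟩

lemma subset_serreGenerated (T : Set 𝒜) : T ⊆ serreGenerated T :=
  fun X hX S hS => hS.2 hX

lemma serreGenerated_subset {T S : Set 𝒜} (hS : IsSerreSubcategory S) (h : T ⊆ S) :
    serreGenerated T ⊆ S :=
  fun X hX => hX S ⟨hS, h⟩

end Aux

/-- Let `𝒜` be an abelian category, `B` a Serre subcategory of `𝒜`, and
`(C i)_{i : I}` a family of Serre subcategories of `𝒜`. Then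
`B ∩ ⟨⋃ i, C i⟩ = ⟨⋃ i, B ∩ C i⟩`: the infinite distributive law making the poset of Serre
subcategories of `𝒜` a frame. -/
theorem statement0 {𝒜 : Type*} [Category 𝒜] [Abelian 𝒜]
    (B : Set 𝒜) (hB : IsSerreSubcategory B)
    {I : Type*} (C : I → Set 𝒜) (hC : ∀ i, IsSerreSubcategory (C i)) :
    B ∩ serreGenerated (⋃ i, C i) = serreGenerated (⋃ i, B ∩ C i) := by
  set G := serreGenerated (⋃ i, B ∩ C i) with hGdef
  set J := serreGenerated (⋃ i, C i) with hJdef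
  have hG : IsSerreSubcategory G := isSerre_serreGenerated _
  have hJ : IsSerreSubcategory J := isSerre_serreGenerated _
  apply Set.Subset.antisymm
  · -- B ∩ J ⊆ G
    set S : Set 𝒜 := {X | X ∈ J ∧ ∀ Y : 𝒜, Subq X Y → Y ∈ B → Y ∈ G} with hSdef
    have hSserre : IsSerreSubcategory S := by
      refine ⟨?_, ?_, ?_⟩
      · rintro X Y e ⟨hXJ, hX⟩
        refine ⟨hJ.1 X Y e hXJ, fun Z hZ hZB => hX Z ?_ hZB⟩
        exact subq_trans ⟨X, 𝟙 X, e.hom, inferInstance, inferInstance⟩ hZ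
      · intro X hX
        exact ⟨hJ.2.1 X hX, fun Y hY _ => hG.2.1 Y (subq_isZero hY hX)⟩
      · intro Cx hCx
        have := hCx.mono_f
        have := hCx.epi_g
        constructor
        · rintro ⟨hXJ, hX⟩
          have h13 := (hJ.2.2 Cx hCx).1 hXJ
          refine ⟨⟨h13.1, fun Y hY hYB => hX Y ?_ hYB⟩, ⟨h13.2, fun Y hY hYB => hX Y ?_ hYB⟩⟩
          · exact subq_trans (subq_of_mono Cx.f) hY
          · exact subq_trans (subq_of_epi Cx.g) hY
        · rintro ⟨⟨h1J, h1⟩, ⟨h3J, h3⟩⟩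
          refine ⟨(hJ.2.2 Cx hCx).2 ⟨h1J, h3J⟩, fun Y hY hYB => ?_⟩
          obtain ⟨T, hT, hT2, hsq1, hsq3, hY1, hY3⟩ := subq_decomp hCx hY
          have hT1B : T.X₁ ∈ B := mem_of_subq hB hY1 hYB
          have hT3B : T.X₃ ∈ B := mem_of_subq hB hY3 hYB
          have hT1G : T.X₁ ∈ G := h1 T.X₁ hsq1 hT1B
          have hT3G : T.X₃ ∈ G := h3 T.X₃ hsq3 hT3B
          have : T.X₂ ∈ G := (hG.2.2 T hT).2 ⟨hT1G, hT3G⟩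
          rwa [hT2] at this
    have hsub : (⋃ i, C i) ⊆ S := by
      rintro X hX
      obtain ⟨_, ⟨i, rfl⟩, hXi⟩ := hX
      refine ⟨subset_serreGenerated _ (Set.mem_iUnion.2 ⟨i, hXi⟩), fun Y hY hYB => ?_⟩
      have hYCi : Y ∈ C i := mem_of_subq (hC i) hY hXi
      exact subset_serreGenerated _ (Set.mem_iUnion.2 ⟨i, ⟨hYB, hYCi⟩⟩)
    have hJS : J ⊆ S := serreGenerated_subset hSserre hsub
    rintro X ⟨hXB, hXJ⟩
    exact (hJS hXJ).2 X (subq_refl X) hXB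
  · -- G ⊆ B ∩ J
    have hBJ : IsSerreSubcategory (B ∩ J) := by
      refine ⟨?_, ?_, ?_⟩
      · rintro X Y e ⟨h1, h2⟩
        exact ⟨hB.1 X Y e h1, hJ.1 X Y e h2⟩
      · intro X hX
        exact ⟨hB.2.1 X hX, hJ.2.1 X hX⟩
      · intro Cx hCx
        constructor
        · rintro ⟨h1, h2⟩
          have a := (hB.2.2 Cx hCx).1 h1
          have b := (hJ.2.2 Cx hCx).1 h2
          exact ⟨⟨a.1, b.1⟩, ⟨a.2, b.2⟩⟩
        · rintro ⟨⟨a1, b1⟩, ⟨a3, b3⟩⟩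
          exact ⟨(hB.2.2 Cx hCx).2 ⟨a1, a3⟩, (hJ.2.2 Cx hCx).2 ⟨b1, b3⟩⟩
    apply serreGenerated_subset hBJ
    rintro X hX
    obtain ⟨_, ⟨i, rfl⟩, hXB, hXCi⟩ := hX
    exact ⟨hXB, subset_serreGenerated _ (Set.mem_iUnion.2 ⟨i, hXCi⟩)⟩
end

section
/- Let R be a commutative ring, let M be an R-module, and let Q →f P →g M → 0 be an exact sequence of R-modules (g surjective, range f = ker g) in which P and Q are finitely generated projective R-modules. Let Tr(M) be the cokernel of the dual map f* : Hom_R(P, R) → Hom_R(Q, R) given by precomposition with f, and let π : Hom_R(Q, R) → Tr(M) be the quotient projection. Then for every R-module X the sequence 0 → Hom_R(M, X) → Hom_R(P, X) → Hom_R(Q, X) → Tr(M) ⊗_R X → 0 is exact, where the map Hom_R(M,X) → Hom_R(P,X) is precomposition with g, the map Hom_R(P,X) → Hom_R(Q,X) is precomposition with f, and the map Hom_R(Q, X) → Tr(M) ⊗_R X is the composite of the inverse of the canonical isomorphism Hom_R(Q, R) ⊗_R X ≅ Hom_R(Q, X) (sending φ ⊗ x to q ↦ φ(q) • x, an isomorphism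 because Q is finitely generated projective) with π ⊗ id_X. -/
open TensorProduct

theorem dth_surj (R : Type*) [CommRing R] (P X : Type*)
    [AddCommGroup P] [Module R P] [Module.Finite R P] [Module.Projective R P]
    [AddCommGroup X] [Module R X] :
    Function.Surjective (dualTensorHom R P X) := by
  obtain ⟨n, p, hp⟩ := Module.Finite.exists_fin' R P
  obtain ⟨s, hs⟩ := Module.projective_lifting_property p LinearMap.id hp
  intro χ
  refine ⟨∑ i : Fin n, ((LinearMap.proj i).comp s) ⊗ₜ χ (p (Pi.single (M := fun _ => R) i 1)), ?_⟩
  ext q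
  have key : ∑ i : Fin n, (s q i) • (Pi.single (M := fun _ => R) i 1) = s q := by
    have : ∀ i : Fin n, (s q i) • (Pi.single (M := fun _ => R) i 1)
        = Pi.single (M := fun _ => R) i (s q i) := by
      intro i; ext j; by_cases h : j = i <;> simp [Pi.single_apply, h]
    simp_rw [this]
    exact Finset.univ_sum_single (s q)
  calc dualTensorHom R P X
        (∑ i : Fin n, ((LinearMap.proj i).comp s) ⊗ₜ χ (p (Pi.single (M := fun _ => R) i 1))) q
      = ∑ i : Fin n, (s q i) • χ (p (Pi.single (M := fun _ => R) i 1)) := by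
        simp [map_sum]
    _ = χ (p (∑ i : Fin n, (s q i) • (Pi.single (M := fun _ => R) i 1))) := by
        simp [map_sum, map_smul]
    _ = χ q := by rw [key, show p (s q) = q from by rw [← LinearMap.comp_apply, hs]; rfl]

theorem statement1 (R : Type*) [CommRing R]
    (M P Q : Type*) [AddCommGroup M] [Module R M]
    [AddCommGroup P] [Module R P] [Module.Finite R P] [Module.Projective R P]
    [AddCommGroup Q] [Module R Q] [Module.Finite R Q] [Module.Projective R Q]
    (f : Q →ₗ[R] P) (g : P →ₗ[R] M)
    (hg : Function.Surjective g) (hfg : Function.Exact f g)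
    (X : Type*) [AddCommGroup X] [Module R X]
    (e : ((Q →ₗ[R] R) ⊗[R] X) ≃ₗ[R] (Q →ₗ[R] X))
    (he : ∀ (φ : Q →ₗ[R] R) (x : X) (q : Q), e (φ ⊗ₜ x) q = φ q • x) :
    Function.Injective (LinearMap.lcomp R X g) ∧
    Function.Exact (LinearMap.lcomp R X g) (LinearMap.lcomp R X f) ∧
    Function.Exact (LinearMap.lcomp R X f)
      ((LinearMap.rTensor X
          (LinearMap.range (LinearMap.lcomp R R f)).mkQ).comp e.symm.toLinearMap) ∧
    Function.Surjective
      ((LinearMap.rTensor X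
          (LinearMap.range (LinearMap.lcomp R R f)).mkQ).comp e.symm.toLinearMap) := by
  have hgf0 : ∀ q, g (f q) = 0 := fun q => hfg.apply_apply_eq_zero q
  -- key commutation: e ∘ rTensor (f*) = lcomp f ∘ dualTensorHom
  have hcomm : e.toLinearMap ∘ₗ LinearMap.rTensor X (LinearMap.lcomp R R f)
      = (LinearMap.lcomp R X f) ∘ₗ dualTensorHom R P X := by
    apply TensorProduct.ext'
    intro φ x
    ext q
    simp only [LinearMap.comp_apply, LinearMap.rTensor_tmul, LinearMap.lcomp_apply,
      dualTensorHom_apply, LinearEquiv.coe_coe]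
    rw [he]
    simp
  refine ⟨?_, ?_, ?_, ?_⟩
  · intro a b h
    ext m
    obtain ⟨p, rfl⟩ := hg m
    exact LinearMap.congr_fun h p
  · intro ψ
    constructor
    · intro h0
      have hle : LinearMap.ker g ≤ LinearMap.ker ψ := by
        intro x hx
        rw [hfg.linearMap_ker_eq] at hx
        obtain ⟨q, rfl⟩ := hx
        simpa using LinearMap.congr_fun h0 q
    -- χ := liftQ ∘ equiv.symm
      refine ⟨((LinearMap.ker g).liftQ ψ hle) ∘ₗ (g.quotKerEquivOfSurjective hg).symm, ?_⟩
      ext p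
      have h1 : (g.quotKerEquivOfSurjective hg).symm (g p) = Submodule.Quotient.mk p := by
        apply (g.quotKerEquivOfSurjective hg).injective
        simp only [LinearEquiv.apply_symm_apply]
        rfl
      simp only [LinearMap.lcomp_apply, LinearMap.comp_apply, LinearEquiv.coe_coe, h1]
      rfl
    · rintro ⟨χ, rfl⟩
      ext q
      simp [hgf0 q]
  · -- exactness at Hom(Q,X)
    have hT : Function.Exact (LinearMap.rTensor X (LinearMap.lcomp R R f))
        (LinearMap.rTensor X (LinearMap.range (LinearMap.lcomp R R f)).mkQ) :=
      rTensor_exact X (LinearMap.exact_map_mkQ_range _) (Submodule.mkQ_surjective _)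
    intro ψ
    rw [LinearMap.comp_apply]
    simp only [LinearEquiv.coe_coe]
    rw [hT (e.symm ψ)]
    constructor
    · rintro ⟨t, ht⟩
      refine ⟨dualTensorHom R P X t, ?_⟩
      have h2 := LinearMap.congr_fun hcomm t
      simp only [LinearMap.comp_apply, LinearEquiv.coe_coe] at h2
      rw [← h2, ht, LinearEquiv.apply_symm_apply]
    · rintro ⟨χ, rfl⟩
      obtain ⟨u, rfl⟩ := dth_surj R P X χ
      refine ⟨u, ?_⟩
      apply e.injective
      rw [LinearEquiv.apply_symm_apply]
      have h2 := LinearMap.congr_fun hcomm u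
      simp only [LinearMap.comp_apply, LinearEquiv.coe_coe] at h2
      exact h2
  · exact (LinearMap.rTensor_surjective X (Submodule.mkQ_surjective _)).comp
      (LinearEquiv.surjective _)
end

section
/- Let R be a ring and let FP(R) be the category of finitely presented additive functors on finitely presented left R-modules. An object G of FP(R) is a projective object of the category FP(R) if and only if there exists a finitely presented left R-module M such that G is isomorphic in FP(R) to the representable functor Hom_R(M, −). -/
open CategoryTheory CategoryTheory.Limits

universe u

variable (R : Type u) [Ring R]

/-- The category `fpMod(R)` of finitely presented left `R`-modules, realized as the full
subcategory of `ModuleCat R` spanned by the finitely presented modules. -/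
abbrev FPModuleCat := ObjectProperty.FullSubcategory (fun M : ModuleCat.{u} R => Module.FinitePresentation R M)

/-- The covariant hom functor `Hom_R(A, −) : fpMod(R) ⥤ Ab`. -/
@[simps]
def homFunctor (A : ModuleCat.{u} R) : FPModuleCat R ⥤ AddCommGrpCat.{u} where
  obj M := AddCommGrpCat.of (A →ₗ[R] M.obj)
  map {M N} φ := AddCommGrpCat.ofHom
    { toFun := fun g => LinearMap.comp φ.hom.hom g
      map_zero' := LinearMap.comp_zero _
      map_add' := fun g₁ g₂ => LinearMap.comp_add g₁ g₂ _ }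
  map_id M := by ext; rfl
  map_comp φ ψ := by ext; rfl

/-- The natural transformation `Hom_R(B, −) ⟶ Hom_R(A, −)` given by precomposition with an
`R`-linear map `α : A → B`. -/
@[simps]
def homNatTrans {A B : ModuleCat.{u} R} (α : A →ₗ[R] B) :
    homFunctor R B ⟶ homFunctor R A where
  app M := AddCommGrpCat.ofHom
    { toFun := fun g => LinearMap.comp g α
      map_zero' := LinearMap.zero_comp α
      map_add' := fun g₁ g₂ => LinearMap.add_comp α g₂ g₁ }
  naturality M N φ := by ext; rfl

/-- A functor `fpMod(R) ⥤ Ab` is finitely presented if it is isomorphic to the cokernel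
(computed in the functor category, i.e. pointwise) of a natural transformation
`Hom_R(B, −) ⟶ Hom_R(A, −)` coming from an `R`-linear map `α : A → B` between finitely
presented modules. -/
def IsFPFunctor (G : FPModuleCat R ⥤ AddCommGrpCat.{u}) : Prop :=
  ∃ (A B : FPModuleCat R) (α : A.obj →ₗ[R] B.obj),
    Nonempty (G ≅ cokernel (homNatTrans R α))

/-- The category `FP(R)` of finitely presented functors on finitely presented left
`R`-modules. -/
abbrev FPFunctorCat := ObjectProperty.FullSubcategory (IsFPFunctor R)

/-! ### Auxiliary lemmas -/

namespace Statement2Aux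

variable {R}

lemma app_apply_eq {F G : FPModuleCat R ⥤ AddCommGrpCat.{u}} {f g : F ⟶ G} (h : f = g)
    (X : FPModuleCat R) (x : F.obj X) : f.app X x = g.app X x := by rw [h]

lemma comp_eq_zero_apply {F G H : FPModuleCat R ⥤ AddCommGrpCat.{u}} {f : F ⟶ G} {g : G ⟶ H}
    (h : f ≫ g = 0) (X : FPModuleCat R) (x : F.obj X) : g.app X (f.app X x) = 0 := by
  have h2 := app_apply_eq h X x
  simpa using h2

/-- Yoneda-style rigidity: a natural transformation out of `homFunctor` is determined by its
value on the identity. -/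
lemma app_eq {A : FPModuleCat R} {F : FPModuleCat R ⥤ AddCommGrpCat.{u}} (η : homFunctor R A.obj ⟶ F)
    (X : FPModuleCat R) (g : A.obj →ₗ[R] X.obj) :
    η.app X g = F.map (ObjectProperty.homMk (ModuleCat.ofHom g))
      (η.app A (show ((homFunctor R A.obj).obj A : Type u) from LinearMap.id)) := by
  have h := ConcreteCategory.congr_hom (η.naturality (ObjectProperty.homMk (ModuleCat.ofHom g)))
      (show ((homFunctor R A.obj).obj A : Type u) from (LinearMap.id : A.obj →ₗ[R] A.obj))
  conv_lhs => rw [← LinearMap.comp_id g]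
  exact h

lemma hom_ext' {A : FPModuleCat R} {F : FPModuleCat R ⥤ AddCommGrpCat.{u}}
    {η θ : homFunctor R A.obj ⟶ F}
    (h : η.app A (show ((homFunctor R A.obj).obj A : Type u) from LinearMap.id)
       = θ.app A (show ((homFunctor R A.obj).obj A : Type u) from LinearMap.id)) : η = θ := by
  apply NatTrans.ext; funext X; apply AddCommGrpCat.ext; intro g
  rw [app_eq η X g, app_eq θ X g, h]

lemma homNatTrans_comp' {A B C : ModuleCat.{u} R} (α : A →ₗ[R] B) (β : C →ₗ[R] A) :
    homNatTrans R α ≫ homNatTrans R β = homNatTrans R (α ∘ₗ β) := by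
  apply NatTrans.ext; funext X; apply AddCommGrpCat.ext; intro g
  show ((g : B →ₗ[R] X.obj) ∘ₗ α) ∘ₗ β = (g : B →ₗ[R] X.obj) ∘ₗ (α ∘ₗ β)
  apply LinearMap.ext; intro x; rfl

lemma homNatTrans_id' (A : ModuleCat.{u} R) :
    homNatTrans R (LinearMap.id : A →ₗ[R] A) = 𝟙 (homFunctor R A) := by
  apply NatTrans.ext; funext X; apply AddCommGrpCat.ext; intro g
  show (g : A →ₗ[R] X.obj) ∘ₗ LinearMap.id = (g : A →ₗ[R] X.obj)
  apply LinearMap.ext; intro x; rfl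

lemma homNatTrans_zero (A B : ModuleCat.{u} R) : homNatTrans R (0 : A →ₗ[R] B) = 0 := by
  apply NatTrans.ext; funext X; apply AddCommGrpCat.ext; intro g
  show (g : B →ₗ[R] X.obj) ∘ₗ (0 : A →ₗ[R] B) = (0 : A →ₗ[R] X.obj)
  exact LinearMap.comp_zero _

lemma surj_of_epi {F G : FPModuleCat R ⥤ AddCommGrpCat.{u}} (f : F ⟶ G) [Epi f]
    (X : FPModuleCat R) : Function.Surjective (f.app X) := by
  rw [← AddCommGrpCat.epi_iff_surjective]
  infer_instance

lemma homFunctor_isFP (M : FPModuleCat R) : IsFPFunctor R (homFunctor R M.obj) :=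
  ⟨M, M, 0, ⟨(cokernelIsoOfEq (homNatTrans_zero M.obj M.obj) ≪≫ cokernelZeroIsoTarget).symm⟩⟩

lemma epi_sub {X Y : FPFunctorCat R} (f : X ⟶ Y) (h : Epi f.hom) :
    Epi f :=
  ⟨fun u v huv => InducedCategory.hom_ext (h.1 u.hom v.hom (congrArg InducedCategory.Hom.hom huv))⟩

lemma fp_prod {M N : Type u} [AddCommGroup M] [Module R M] [AddCommGroup N] [Module R N]
    [Module.FinitePresentation R M] [Module.FinitePresentation R N] :
    Module.FinitePresentation R (M × N) := by
  haveI : Module.FinitePresentation R ↥(LinearMap.ker (LinearMap.snd R M N)) := by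
    refine Module.finitePresentation_of_surjective
      (LinearMap.codRestrict _ (LinearMap.inl R M N) (fun x => by simp)) ?_ ?_
    · rintro ⟨⟨a, b⟩, hb⟩
      have hb0 : b = 0 := hb
      exact ⟨a, Subtype.ext (by subst hb0; rfl)⟩
    · have hker : LinearMap.ker (LinearMap.codRestrict (LinearMap.ker (LinearMap.snd R M N))
          (LinearMap.inl R M N) (fun x => by simp)) = ⊥ := by
        apply le_antisymm _ bot_le
        intro z hz
        have hz' : LinearMap.inl R M N z = 0 := congrArg Subtype.val hz
        have : z = 0 := by
          simpa using congrArg Prod.fst hz'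
        simp [this]
      rw [hker]
      exact Submodule.fg_bot
  exact Module.finitePresentation_of_ker (LinearMap.snd R M N) (fun y => ⟨(0, y), rfl⟩)

lemma isFP_cokernel {A'' : FPModuleCat R} {Y : FPModuleCat R ⥤ AddCommGrpCat.{u}}
    (hY : IsFPFunctor R Y) (h : homFunctor R A''.obj ⟶ Y) : IsFPFunctor R (cokernel h) := by
  obtain ⟨A', B', α', ⟨eY⟩⟩ := hY
  set h₂ : homFunctor R A''.obj ⟶ cokernel (homNatTrans R α') := h ≫ eY.hom with hh₂
  obtain ⟨β₀, hβ⟩ := surj_of_epi (cokernel.π (homNatTrans R α')) A''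
    (h₂.app A'' (show ((homFunctor R A''.obj).obj A'' : Type u) from LinearMap.id))
  let β : A'.obj →ₗ[R] A''.obj := β₀
  have hg : homNatTrans R β ≫ cokernel.π (homNatTrans R α') = h₂ := by
    apply hom_ext'
    show (cokernel.π (homNatTrans R α')).app A''
        ((homNatTrans R β).app A'' (show ((homFunctor R A''.obj).obj A'' : Type u) from
          LinearMap.id)) = _
    rw [show ((homNatTrans R β).app A'' (show ((homFunctor R A''.obj).obj A'' : Type u) from
      LinearMap.id)) = (show ((homFunctor R A'.obj).obj A'' : Type u) from β)
      from LinearMap.id_comp β]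
    exact hβ
  haveI := B'.property
  haveI := A''.property
  let P : FPModuleCat R := ⟨ModuleCat.of R (B'.obj × A''.obj), fp_prod⟩
  let γ : A'.obj →ₗ[R] P.obj := LinearMap.prod α' β
  have e1 : (LinearMap.fst R B'.obj A''.obj) ∘ₗ γ = α' := by
    apply LinearMap.ext; intro x; rfl
  have e2 : (LinearMap.snd R B'.obj A''.obj) ∘ₗ γ = β := by
    apply LinearMap.ext; intro x; rfl
  have key1 : homNatTrans R α' ≫ cokernel.π (homNatTrans R γ) = 0 := by
    rw [← e1, ← homNatTrans_comp' (A := P.obj) (B := B'.obj) (C := A'.obj)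
      (LinearMap.fst R B'.obj A''.obj) γ,
      Category.assoc, cokernel.condition, comp_zero]
  let w : cokernel (homNatTrans R α') ⟶ cokernel (homNatTrans R γ) :=
    cokernel.desc _ (cokernel.π (homNatTrans R γ)) key1
  have key2 : h₂ ≫ w = 0 := by
    rw [← hg, Category.assoc]
    rw [show cokernel.π (homNatTrans R α') ≫ w = cokernel.π (homNatTrans R γ) from
      cokernel.π_desc _ _ _]
    rw [← e2, ← homNatTrans_comp' (A := P.obj) (B := A''.obj) (C := A'.obj)
      (LinearMap.snd R B'.obj A''.obj) γ,
      Category.assoc, cokernel.condition, comp_zero]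
  have key0 : homNatTrans R γ ≫ (cokernel.π (homNatTrans R α') ≫ cokernel.π h₂) = 0 := by
    apply NatTrans.ext; funext X; apply AddCommGrpCat.ext; intro k₀
    let k : P.obj →ₗ[R] X.obj := k₀
    have hdec : (homNatTrans R γ).app X k
        = (homNatTrans R α').app X (k ∘ₗ LinearMap.inl R B'.obj A''.obj)
          + (homNatTrans R β).app X (k ∘ₗ LinearMap.inr R B'.obj A''.obj) := by
      apply LinearMap.ext; intro x
      show k (γ x)
        = k ((α' x, 0)) + k ((0, β x))
      rw [← map_add]
      congr 1
      show (α' x, β x) = (α' x, 0) + (0, β x)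
      rw [Prod.mk_add_mk, add_zero, zero_add]
    have z1 : (cokernel.π (homNatTrans R α')).app X
        ((homNatTrans R α').app X (k ∘ₗ LinearMap.inl R B'.obj A''.obj))
        = 0 := comp_eq_zero_apply (cokernel.condition _) X _
    have z2 : (cokernel.π h₂).app X ((cokernel.π (homNatTrans R α')).app X
        ((homNatTrans R β).app X (k ∘ₗ LinearMap.inr R B'.obj A''.obj)))
        = 0 := by
      have e3 : (cokernel.π (homNatTrans R α')).app X
          ((homNatTrans R β).app X (k ∘ₗ LinearMap.inr R B'.obj A''.obj))
          = h₂.app X (k ∘ₗ LinearMap.inr R B'.obj A''.obj) :=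
        app_apply_eq hg X _
      rw [e3]
      exact comp_eq_zero_apply (cokernel.condition h₂) X _
    show (cokernel.π h₂).app X ((cokernel.π (homNatTrans R α')).app X
      ((homNatTrans R γ).app X k)) = (0 : homFunctor R P.obj ⟶ cokernel h₂).app X k
    rw [hdec, map_add, map_add, z1, map_zero, z2, zero_add]
    simp; rfl
  let iso2 : cokernel (homNatTrans R γ) ≅ cokernel h₂ := by
    refine ⟨cokernel.desc _ (cokernel.π (homNatTrans R α') ≫ cokernel.π h₂) key0,
      cokernel.desc _ w key2, ?_, ?_⟩
    · rw [← cancel_epi (cokernel.π (homNatTrans R γ))]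
      rw [cokernel.π_desc_assoc, Category.assoc, cokernel.π_desc, Category.comp_id]
      exact cokernel.π_desc _ _ _
    · rw [← cancel_epi (cokernel.π h₂), cokernel.π_desc_assoc, Category.comp_id]
      rw [← cancel_epi (cokernel.π (homNatTrans R α')), cokernel.π_desc_assoc, cokernel.π_desc]
  refine ⟨A', P, γ, ⟨?_⟩⟩
  calc cokernel h ≅ cokernel h₂ := (cokernelCompIsIso h eY.hom).symm
    _ ≅ cokernel (homNatTrans R γ) := iso2.symm

lemma epi_underlying {E X : FPFunctorCat R} (e : E ⟶ X) [he : Epi e]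
    {A'' : FPModuleCat R} (q : homFunctor R A''.obj ⟶ E.obj) [hq : Epi q] :
    Epi (q ≫ e.hom) := by
  set h : homFunctor R A''.obj ⟶ X.obj := q ≫ e.hom with hh
  have hFP : IsFPFunctor R (cokernel h) := isFP_cokernel X.property h
  let Cobj : FPFunctorCat R := ⟨cokernel h, hFP⟩
  let PA : FPFunctorCat R := ⟨homFunctor R A''.obj, homFunctor_isFP A''⟩
  let q' : PA ⟶ E := ObjectProperty.homMk q
  haveI : Epi q' := epi_sub q' hq
  haveI : Epi (q' ≫ e) := epi_comp q' e
  let π : X ⟶ Cobj := ObjectProperty.homMk (cokernel.π h)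
  have hzero : (q' ≫ e) ≫ π = (q' ≫ e) ≫ (0 : X ⟶ Cobj) := by
    have h1 : h ≫ cokernel.π h = 0 := cokernel.condition h
    have h2 : (q' ≫ e) ≫ (0 : X ⟶ Cobj) = (0 : PA ⟶ Cobj) := comp_zero
    exact (show (q' ≫ e) ≫ π = (0 : PA ⟶ Cobj) from InducedCategory.hom_ext (by exact h1)).trans h2.symm
  have hπ : π = 0 := (cancel_epi (q' ≫ e)).mp hzero
  exact Abelian.epi_of_cokernel_π_eq_zero h (congrArg InducedCategory.Hom.hom hπ)

lemma projective_of_iso_hom (Q : FPFunctorCat R) (M : FPModuleCat R)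
    (i : Q.obj ≅ homFunctor R M.obj) : Projective Q := by
  constructor
  intro E X f e he
  obtain ⟨A'', B'', α'', ⟨eE⟩⟩ := E.property
  let q : homFunctor R A''.obj ⟶ E.obj := cokernel.π (homNatTrans R α'') ≫ eE.inv
  haveI : Epi q := epi_comp _ _
  haveI hbig : Epi (q ≫ e.hom) := epi_underlying e q
  set h : homFunctor R A''.obj ⟶ X.obj := q ≫ e.hom with hh
  let f' : homFunctor R M.obj ⟶ X.obj := i.inv ≫ f.hom
  obtain ⟨x₀, hx⟩ := surj_of_epi h M
    (f'.app M (show ((homFunctor R M.obj).obj M : Type u) from LinearMap.id))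
  let x : A''.obj →ₗ[R] M.obj := x₀
  have hL : homNatTrans R x ≫ h = f' := by
    apply hom_ext'
    show h.app M ((homNatTrans R x).app M
      (show ((homFunctor R M.obj).obj M : Type u) from LinearMap.id)) = _
    rw [show ((homNatTrans R x).app M (show ((homFunctor R M.obj).obj M : Type u) from
      LinearMap.id)) = (show ((homFunctor R A''.obj).obj M : Type u) from x)
      from LinearMap.id_comp x]
    exact hx
  let PA : FPFunctorCat R := ⟨homFunctor R A''.obj, homFunctor_isFP A''⟩
  let q' : PA ⟶ E := ObjectProperty.homMk q
  let l0 : Q.obj ⟶ homFunctor R A''.obj := i.hom ≫ homNatTrans R x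
  refine ⟨(ObjectProperty.homMk l0 : Q ⟶ PA) ≫ q', ?_⟩
  apply ObjectProperty.hom_ext
  show (i.hom ≫ homNatTrans R x) ≫ (q ≫ (e.hom)) = f.hom
  rw [Category.assoc, hL]
  show i.hom ≫ i.inv ≫ f.hom = f.hom
  rw [Iso.hom_inv_id_assoc]

end Statement2Aux

open Statement2Aux

/-- An object `G` of `FP(R)` is projective if and only if it is isomorphic to a
representable functor `Hom_R(M, −)` for some finitely presented left `R`-module `M`. -/
theorem statement2 (G : FPFunctorCat R) :
    Projective G ↔ ∃ M : FPModuleCat R, Nonempty (G.obj ≅ homFunctor R M.obj) := by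
  constructor
  · intro hproj
    obtain ⟨A, B, α, ⟨eG⟩⟩ := G.property
    let q : homFunctor R A.obj ⟶ G.obj := cokernel.π (homNatTrans R α) ≫ eG.inv
    haveI : Epi q := epi_comp _ _
    let PA : FPFunctorCat R := ⟨homFunctor R A.obj, homFunctor_isFP A⟩
    let q' : PA ⟶ G := ObjectProperty.homMk q
    haveI : Epi q' := epi_sub q' (inferInstance : Epi q)
    obtain ⟨s', hs⟩ := hproj.factors (𝟙 G) q'
    let s : G.obj ⟶ homFunctor R A.obj := s'.hom
    have hsq : s ≫ q = 𝟙 G.obj := congrArg InducedCategory.Hom.hom hs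
    let φ : homFunctor R A.obj ⟶ homFunctor R A.obj := q ≫ s
    let ε : A.obj →ₗ[R] A.obj :=
      φ.app A (show ((homFunctor R A.obj).obj A : Type u) from LinearMap.id)
    have hφ : (q ≫ s : homFunctor R A.obj ⟶ homFunctor R A.obj) = homNatTrans R ε := by
      apply hom_ext'
      show φ.app A (show ((homFunctor R A.obj).obj A : Type u) from LinearMap.id)
        = (homNatTrans R ε).app A (show ((homFunctor R A.obj).obj A : Type u) from LinearMap.id)
      rw [show ((homNatTrans R ε).app A (show ((homFunctor R A.obj).obj A : Type u) from
        LinearMap.id)) = (show ((homFunctor R A.obj).obj A : Type u) from ε)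
        from LinearMap.id_comp ε]
    have hφφ : φ ≫ φ = φ := by
      show (q ≫ s) ≫ q ≫ s = q ≫ s
      calc (q ≫ s) ≫ q ≫ s = q ≫ (s ≫ q) ≫ s := by simp only [Category.assoc]
        _ = q ≫ s := by rw [hsq, Category.id_comp]
    have hεε : ε ∘ₗ ε = ε := by
      have h1 := app_apply_eq hφφ A
        (show ((homFunctor R A.obj).obj A : Type u) from LinearMap.id)
      have h2 : (φ ≫ φ).app A (show ((homFunctor R A.obj).obj A : Type u) from LinearMap.id)
          = (show ((homFunctor R A.obj).obj A : Type u) from ε ∘ₗ ε) := by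
        show φ.app A (φ.app A (show ((homFunctor R A.obj).obj A : Type u) from LinearMap.id))
          = _
        rw [show φ.app A (show ((homFunctor R A.obj).obj A : Type u) from LinearMap.id)
          = (show ((homFunctor R A.obj).obj A : Type u) from ε) from rfl]
        rw [show (φ : homFunctor R A.obj ⟶ homFunctor R A.obj) = homNatTrans R ε from hφ]
        rfl
      exact h2.symm.trans h1
    have hfix : ∀ y : A.obj, ε (ε y) = ε y := fun y => DFunLike.congr_fun hεε y
    let Mmod := LinearMap.range ε
    let ρ : A.obj →ₗ[R] ↥Mmod := ε.rangeRestrict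
    let ι : ↥Mmod →ₗ[R] A.obj := Mmod.subtype
    have hιρ : ι ∘ₗ ρ = ε := by apply LinearMap.ext; intro y; rfl
    haveI := A.property
    have hkerfg : (LinearMap.ker ρ).FG := by
      have hker : LinearMap.ker ε = LinearMap.range (LinearMap.id - ε) := by
        apply le_antisymm
        · intro y hy
          exact ⟨y, by simp [LinearMap.mem_ker.mp hy]⟩
        · rintro y ⟨z, rfl⟩
          simp [LinearMap.mem_ker, map_sub, hfix z]
      rw [show LinearMap.ker ρ = LinearMap.ker ε from LinearMap.ker_rangeRestrict ε, hker,
        LinearMap.range_eq_map]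
      exact Submodule.FG.map _ Module.Finite.fg_top
    haveI hMfp : Module.FinitePresentation R ↥Mmod :=
      Module.finitePresentation_of_surjective ρ ε.surjective_rangeRestrict hkerfg
    let Mo : FPModuleCat R := ⟨ModuleCat.of R ↥Mmod, hMfp⟩
    refine ⟨Mo, ⟨?_⟩⟩
    let ι' : (Mo.obj : ModuleCat.{u} R) →ₗ[R] A.obj := ι
    let ρ' : A.obj →ₗ[R] (Mo.obj : ModuleCat.{u} R) := ρ
    have hcomp1 : homNatTrans R ι' ≫ homNatTrans R ρ' = homNatTrans R ε := by
      rw [homNatTrans_comp']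
      congr 1
    have hcomp2 : ρ' ∘ₗ (ε ∘ₗ ι') = LinearMap.id := by
      apply LinearMap.ext
      rintro ⟨y, hy⟩
      obtain ⟨z, rfl⟩ := hy
      apply Subtype.ext
      show ε (ε (ε z)) = ε z
      rw [hfix z, hfix z]
    refine ⟨s ≫ homNatTrans R ι', homNatTrans R ρ' ≫ q, ?_, ?_⟩
    · calc (s ≫ homNatTrans R ι') ≫ homNatTrans R ρ' ≫ q
          = s ≫ (homNatTrans R ι' ≫ homNatTrans R ρ') ≫ q := by simp only [Category.assoc]
        _ = s ≫ (q ≫ s) ≫ q := by rw [hcomp1, ← hφ]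
        _ = (s ≫ q) ≫ s ≫ q := by simp only [Category.assoc]
        _ = 𝟙 G.obj := by rw [hsq]; simp
    · calc (homNatTrans R ρ' ≫ q) ≫ s ≫ homNatTrans R ι'
          = homNatTrans R ρ' ≫ (q ≫ s) ≫ homNatTrans R ι' := by simp only [Category.assoc]
        _ = homNatTrans R ρ' ≫ homNatTrans R ε ≫ homNatTrans R ι' := by rw [hφ]
        _ = homNatTrans R (ρ' ∘ₗ (ε ∘ₗ ι')) := by
            rw [homNatTrans_comp', homNatTrans_comp']
        _ = 𝟙 (homFunctor R Mo.obj) := by rw [hcomp2, homNatTrans_id']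
  · rintro ⟨M, ⟨i⟩⟩
    exact projective_of_iso_hom G M i
end

section
/- Let R be a commutative Noetherian ring, let p ⊆ R be a prime ideal, and let E be an R-module such that: (i) E is an injective R-module, and (ii) there is an injective R-linear map ι : R/p → E whose range is essential in E, i.e., for every x ∈ E with x ≠ 0 there exists r ∈ R with r • x ≠ 0 and r • x ∈ range ι (so E is an injective hull of R/p). Let α : A → B be an R-linear map between finitely generated R-modules. Then the precomposition map Hom_R(B, E) → Hom_R(A, E), f ↦ f ∘ α, is surjective if and only if the localization of ker α at p is zero, i.e., LocalizedModule p.primeCompl (ker α) is trivial. (This expresses that a finitely presented functor 𝒢 with presentation given by α satisfies 𝒢(E(R/p)) ≅ 0 if and only if R_p ⊗_R Defect(𝒢) ≅ 0, where Defect(𝒢) = ker α.) -/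
set_option linter.unusedSectionVars false
set_option linter.unusedVariables false

universe v w

section AuxLemmas

variable {R : Type u} [CommRing R] [IsNoetherianRing R] {p : Ideal R} [hp : p.IsPrime]
  {E : Type v} [AddCommGroup E] [Module R E]
  {ι : (R ⧸ p) →ₗ[R] E}

/-- Extension property of `Module.Injective` for `v`-small modules in any universe. -/
lemma aux_ext_small {E : Type v} [AddCommGroup E] [Module R E] (hE : Module.Injective R E)
    {X Y : Type*} [AddCommGroup X] [AddCommGroup Y] [Module R X] [Module R Y]
    [Small.{v} X] [Small.{v} Y]
    (f : X →ₗ[R] Y) (hf : Function.Injective f) (φ : X →ₗ[R] E) :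
    ∃ h : Y →ₗ[R] E, ∀ x, h (f x) = φ x := by
  let eX := Shrink.linearEquiv R X
  let eY := Shrink.linearEquiv R Y
  obtain ⟨h', hh'⟩ := hE.out (X := Shrink.{v} X) (Y := Shrink.{v} Y)
    (eY.symm.toLinearMap ∘ₗ f ∘ₗ eX.toLinearMap)
    (by
      intro a b hab
      simp only [LinearMap.coe_comp, Function.comp_apply, LinearEquiv.coe_coe] at hab
      exact eX.injective (hf (eY.symm.injective hab)))
    (φ ∘ₗ eX.toLinearMap)
  refine ⟨h' ∘ₗ (eY.symm : Y →ₗ[R] Shrink.{v} Y), fun x => ?_⟩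
  have := hh' (eX.symm x)
  simpa using this


lemma aux_smul_inj (hι : Function.Injective ι)
    (hess : ∀ x : E, x ≠ 0 → ∃ r : R, r • x ≠ 0 ∧ r • x ∈ LinearMap.range ι)
    {s : R} (hs : s ∈ p.primeCompl) {e : E} (he : s • e = 0) : e = 0 := by
  by_contra h
  obtain ⟨r, hr1, c, hc⟩ := hess e h
  obtain ⟨c₀, rfl⟩ := Submodule.Quotient.mk_surjective p c
  have h1 : ι (s • (Submodule.Quotient.mk c₀ : R ⧸ p)) = 0 := by
    rw [map_smul, hc, smul_comm, he, smul_zero]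
  have h2 : s • (Submodule.Quotient.mk c₀ : R ⧸ p) = 0 := by
    apply hι; rw [h1, map_zero]
  rw [← Submodule.Quotient.mk_smul, Submodule.Quotient.mk_eq_zero, smul_eq_mul] at h2
  rcases hp.mem_or_mem h2 with h3 | h3
  · exact hs h3
  · apply hr1
    rw [← hc, (Submodule.Quotient.mk_eq_zero _).mpr h3, map_zero]

lemma aux_torsion [IsNoetherianRing R] (hι : Function.Injective ι)
    (hess : ∀ x : E, x ≠ 0 → ∃ r : R, r • x ≠ 0 ∧ r • x ∈ LinearMap.range ι)
    (e : E) : ∃ k : ℕ, ∀ a ∈ (p ^ k : Ideal R), a • e = 0 := by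
  set J : Ideal R := LinearMap.ker (LinearMap.toSpanSingleton R E e) with hJ
  have hrad : p ≤ J.radical := by
    intro a ha
    have key : ∃ n : ℕ, a ^ n • e = 0 := by
      set f : ℕ →o Ideal R :=
        ⟨fun n => LinearMap.ker (LinearMap.toSpanSingleton R E (a ^ n • e)),
          monotone_nat_of_le_succ (by
            intro n r hr
            simp only [LinearMap.mem_ker, LinearMap.toSpanSingleton_apply] at hr ⊢
            rw [pow_succ, mul_comm, mul_smul, smul_comm, hr, smul_zero])⟩ with hf
      obtain ⟨n, hn⟩ := (monotone_stabilizes_iff_noetherian.mpr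
        (inferInstance : IsNoetherian R R)) f
      refine ⟨n, ?_⟩
      by_contra hne
      obtain ⟨r, hr1, c, hc⟩ := hess (a ^ n • e) hne
      obtain ⟨c₀, rfl⟩ := Submodule.Quotient.mk_surjective p c
      have hmem : r ∈ f (n + 1) := by
        simp only [hf, OrderHom.coe_mk, LinearMap.mem_ker, LinearMap.toSpanSingleton_apply]
        rw [pow_succ, mul_comm, mul_smul, smul_comm, ← hc, ← map_smul,
          ← Submodule.Quotient.mk_smul, smul_eq_mul,
          (Submodule.Quotient.mk_eq_zero _).mpr (Ideal.mul_mem_right c₀ p ha), map_zero]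
      rw [← hn (n + 1) (Nat.le_succ n)] at hmem
      simp only [hf, OrderHom.coe_mk, LinearMap.mem_ker, LinearMap.toSpanSingleton_apply] at hmem
      exact hr1 hmem
    obtain ⟨n, hn⟩ := key
    exact Ideal.mem_radical_iff.mpr ⟨n, by
      simp only [hJ, LinearMap.mem_ker, LinearMap.toSpanSingleton_apply]; exact hn⟩
  obtain ⟨k, hk⟩ := Ideal.exists_pow_le_of_le_radical_of_fg hrad (IsNoetherian.noetherian p)
  refine ⟨k, fun a ha => ?_⟩
  have := hk ha
  simpa only [hJ, LinearMap.mem_ker, LinearMap.toSpanSingleton_apply] using this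

lemma aux_small_of_sub_quot {M : Type*} [AddCommGroup M] [Module R M] (S : Submodule R M)
    [Small.{v} S] [Small.{v} (M ⧸ S)] : Small.{v} M := by
  have hsur := Submodule.Quotient.mk_surjective S
  set σ : M ⧸ S → M := Function.surjInv hsur with hσ
  have hinj : Function.Injective (fun m : M =>
      ((Submodule.Quotient.mk m : M ⧸ S),
        (⟨m - σ (Submodule.Quotient.mk m),
          (Submodule.Quotient.eq S).mp (Function.surjInv_eq hsur _).symm⟩ : S))) := by
    intro m₁ m₂ h
    have h1 : (Submodule.Quotient.mk m₁ : M ⧸ S) = Submodule.Quotient.mk m₂ :=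
      congrArg Prod.fst h
    have h2 : m₁ - σ (Submodule.Quotient.mk m₁) = m₂ - σ (Submodule.Quotient.mk m₂) :=
      congrArg Subtype.val (congrArg Prod.snd h)
    rw [h1] at h2
    exact sub_left_injective h2
  exact small_of_injective hinj

lemma aux_small_fg_ptorsion (hι : Function.Injective ι)
    {M : Type*} [AddCommGroup M] [Module R M] [Module.Finite R M]
    (hM : ∀ a ∈ p, ∀ m : M, a • m = 0) : Small.{v} M := by
  haveI : Small.{v} (R ⧸ p) := small_of_injective hι
  obtain ⟨t, ht⟩ := Module.Finite.fg_top (R := R) (M := M)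
  have hq := Submodule.Quotient.mk_surjective p
  set σ : R ⧸ p → R := Function.surjInv hq with hσ
  have hsur : Function.Surjective
      (fun c : { x // x ∈ t } → R ⧸ p => ∑ i ∈ t.attach, σ (c i) • (i : M)) := by
    intro m
    have hm : m ∈ Submodule.span R (↑t : Set M) := ht ▸ Submodule.mem_top
    obtain ⟨f, -, hf⟩ := Submodule.mem_span_finset.mp hm
    refine ⟨fun i => Submodule.Quotient.mk (f i), ?_⟩
    rw [← hf, ← Finset.sum_attach t (fun i => f i • i)]
    refine Finset.sum_congr rfl (fun i _ => ?_)
    have hmem : σ (Submodule.Quotient.mk (f i)) - f i ∈ p :=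
      (Submodule.Quotient.eq p).mp (Function.surjInv_eq hq _)
    have h0 := hM _ hmem (i : M)
    rw [sub_smul, sub_eq_zero] at h0
    exact h0
  exact small_of_surjective hsur

lemma aux_small_fg_ppow_torsion [IsNoetherianRing R] (hι : Function.Injective ι) (k : ℕ) :
    ∀ (M : Type w) [AddCommGroup M] [Module R M] [Module.Finite R M],
      (∀ a ∈ (p ^ k : Ideal R), ∀ m : M, a • m = 0) → Small.{v} M := by
  induction k with
  | zero =>
    intro M _ _ _ hM
    have : Subsingleton M := by
      refine ⟨fun m₁ m₂ => ?_⟩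
      have h1 : ∀ m : M, m = 0 := fun m => by
        have := hM 1 (by simp [Ideal.one_eq_top]) m
        rwa [one_smul] at this
      rw [h1 m₁, h1 m₂]
    exact small_of_injective (f := fun _ : M => (default : PUnit.{v+1}))
      (fun a b _ => Subsingleton.elim a b)
  | succ k ih =>
    intro M _ _ _ hM
    set S : Submodule R M := p ^ k • ⊤ with hS
    haveI : Module.Finite R S := Module.Finite.iff_fg.mpr (IsNoetherian.noetherian S)
    have hStor : ∀ a ∈ p, ∀ m : S, a • m = 0 := by
      intro a ha m
      have : a • (m : M) = 0 := by
        refine Submodule.smul_induction_on m.2 ?_ ?_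
        · intro r hr n _
          rw [smul_smul]
          exact hM (a * r) (by
            rw [pow_succ, mul_comm a r]
            exact Ideal.mul_mem_mul hr ha) n
        · intro x y hx hy
          rw [smul_add, hx, hy, add_zero]
      exact Subtype.ext (by simpa using this)
    haveI : Small.{v} S := aux_small_fg_ptorsion hι hStor
    haveI : Module.Finite R (M ⧸ S) :=
      Module.Finite.of_surjective S.mkQ (Submodule.Quotient.mk_surjective S)
    haveI : Small.{v} (M ⧸ S) := by
      refine ih (M ⧸ S) ?_
      intro a ha m
      obtain ⟨y, rfl⟩ := Submodule.Quotient.mk_surjective S m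
      rw [← Submodule.Quotient.mk_smul, Submodule.Quotient.mk_eq_zero]
      exact Submodule.smul_mem_smul ha Submodule.mem_top
    exact aux_small_of_sub_quot S

lemma aux_small_of_finite {Y : Type w} [AddCommGroup Y] [Module R Y] [Module.Finite R Y] :
    Small.{u} Y := by
  obtain ⟨n, s, hs⟩ := Module.Finite.exists_fin (R := R) (M := Y)
  have hsur : Function.Surjective (fun c : Fin n → R => ∑ i, c i • s i) := by
    intro y
    have : y ∈ Submodule.span R (Set.range s) := hs ▸ Submodule.mem_top
    obtain ⟨c, hc⟩ := (Submodule.mem_span_range_iff_exists_fun R).mp this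
    exact ⟨c, hc⟩
  exact small_of_surjective hsur

lemma aux_artin_rees (p : Ideal R) {Y : Type w} [AddCommGroup Y] [Module R Y] [Module.Finite R Y]
    (X : Submodule R Y) :
    ∃ k : ℕ, ∀ n ≥ k, (p ^ n • ⊤ ⊓ X : Submodule R Y) = p ^ (n - k) • (p ^ k • ⊤ ⊓ X) := by
  haveI : Small.{u} Y := aux_small_of_finite (R := R)
  let e : Shrink.{u} Y ≃ₗ[R] Y := Shrink.linearEquiv R Y
  haveI : Module.Finite R (Shrink.{u} Y) := Module.Finite.equiv e.symm
  obtain ⟨k, hk⟩ := Ideal.exists_pow_inf_eq_pow_smul (R := R) (M := Shrink.{u} Y) (I := p)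
    (X.comap e.toLinearMap)
  refine ⟨k, fun n hn => ?_⟩
  have := congrArg (Submodule.map e.toLinearMap) (hk n hn)
  have hmapX : Submodule.map e.toLinearMap (Submodule.comap e.toLinearMap X) = X :=
    Submodule.map_comap_eq_of_surjective e.surjective X
  have htop : Submodule.map e.toLinearMap ⊤ = ⊤ := by
    rw [Submodule.map_top, LinearEquiv.range]
  have hinj : Function.Injective ⇑(e.toLinearMap) := e.injective
  simp only [Submodule.map_inf _ hinj, Submodule.map_smul'', htop, hmapX] at this
  exact this

lemma aux_extend (hE : Module.Injective R E) (hι : Function.Injective ι)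
    (hess : ∀ x : E, x ≠ 0 → ∃ r : R, r • x ≠ 0 ∧ r • x ∈ LinearMap.range ι)
    {Y : Type*} [AddCommGroup Y] [Module R Y] [Module.Finite R Y]
    (X : Submodule R Y) (φ : X →ₗ[R] E) :
    ∃ g : Y →ₗ[R] E, ∀ x : X, g x = φ x := by
  haveI : IsNoetherian R Y := isNoetherian_of_isNoetherianRing_of_finite R Y
  haveI : Module.Finite R X := Module.Finite.iff_fg.mpr (IsNoetherian.noetherian X)
  -- uniform torsion bound on the image of φ
  obtain ⟨t, ht⟩ := Module.Finite.fg_top (R := R) (M := X)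
  choose kf hkf using fun x : X => aux_torsion hι hess (φ x)
  set k₀ := t.sup kf with hk₀def
  have hk₀ : ∀ x : X, ∀ a ∈ (p ^ k₀ : Ideal R), a • φ x = 0 := by
    intro x
    have hx : x ∈ Submodule.span R (↑t : Set X) := ht ▸ Submodule.mem_top
    refine Submodule.span_induction ?_ ?_ ?_ ?_ hx
    · intro y hy a ha
      exact hkf y a (Ideal.pow_le_pow_right (Finset.le_sup hy) ha)
    · intro a _; rw [map_zero, smul_zero]
    · intro y z _ _ hy hz a ha
      rw [map_add, smul_add, hy a ha, hz a ha, add_zero]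
    · intro r y _ hy a ha
      rw [map_smul, smul_comm, hy a ha, smul_zero]
  -- Artin–Rees
  obtain ⟨c, hc⟩ := aux_artin_rees p X
  set n := c + k₀ with hn
  have hAR : (p ^ n • ⊤ ⊓ X : Submodule R Y) = p ^ k₀ • (p ^ c • ⊤ ⊓ X) := by
    have := hc n (Nat.le_add_right c k₀)
    rwa [hn, Nat.add_sub_cancel_left] at this
  set U : Submodule R Y := p ^ n • ⊤ with hU
  have hker : ∀ x : X, (x : Y) ∈ U → φ x = 0 := by
    intro x hxU
    have hmem : (x : Y) ∈ (p ^ k₀ • (p ^ c • ⊤ ⊓ X) : Submodule R Y) := by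
      rw [← hAR]; exact ⟨hxU, x.2⟩
    have main : ∀ y, y ∈ (p ^ k₀ • (p ^ c • ⊤ ⊓ X) : Submodule R Y) →
        ∃ h : y ∈ X, φ ⟨y, h⟩ = 0 := by
      intro y hy
      refine Submodule.smul_induction_on hy ?_ ?_
      · intro r hr z hz
        refine ⟨X.smul_mem r hz.2, ?_⟩
        have h1 : (⟨r • z, X.smul_mem r hz.2⟩ : X) = r • (⟨z, hz.2⟩ : X) := rfl
        rw [h1, map_smul]
        exact hk₀ ⟨z, hz.2⟩ r hr
      · rintro y z ⟨hy1, hy2⟩ ⟨hz1, hz2⟩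
        refine ⟨X.add_mem hy1 hz1, ?_⟩
        have h1 : (⟨y + z, X.add_mem hy1 hz1⟩ : X) = (⟨y, hy1⟩ : X) + (⟨z, hz1⟩ : X) := rfl
        rw [h1, map_add, hy2, hz2, add_zero]
    obtain ⟨h, h0⟩ := main (x : Y) hmem
    have : x = (⟨(x : Y), h⟩ : X) := Subtype.ext rfl
    rw [this]; exact h0
  -- pass to the quotient
  haveI : Module.Finite R (Y ⧸ U) :=
    Module.Finite.of_surjective U.mkQ (Submodule.Quotient.mk_surjective U)
  haveI : Small.{v} (Y ⧸ U) := by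
    refine aux_small_fg_ppow_torsion hι n (Y ⧸ U) ?_
    intro a ha m
    obtain ⟨y, rfl⟩ := Submodule.Quotient.mk_surjective U m
    rw [← Submodule.Quotient.mk_smul, Submodule.Quotient.mk_eq_zero]
    exact Submodule.smul_mem_smul ha Submodule.mem_top
  set π : X →ₗ[R] Y ⧸ U := U.mkQ ∘ₗ X.subtype with hπ
  haveI : Small.{v} (LinearMap.range π) :=
    small_of_injective (f := fun w : LinearMap.range π => (w : Y ⧸ U)) Subtype.val_injective
  have hπker : LinearMap.ker π ≤ LinearMap.ker φ := by
    intro x hx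
    have hxU : (x : Y) ∈ U := by
      have : U.mkQ (x : Y) = 0 := hx
      rwa [← Submodule.Quotient.mk_eq_zero]
    exact LinearMap.mem_ker.mpr (hker x hxU)
  set φ' : (X ⧸ LinearMap.ker π) →ₗ[R] E := Submodule.liftQ (LinearMap.ker π) φ hπker with hφ'
  set e1 := π.quotKerEquivRange with he1
  obtain ⟨ψ, hψ⟩ := aux_ext_small hE (LinearMap.range π).subtype Subtype.val_injective
    (φ' ∘ₗ (e1.symm : _ →ₗ[R] _))
  refine ⟨ψ ∘ₗ U.mkQ, fun x => ?_⟩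
  have h1 : U.mkQ (x : Y) = (LinearMap.range π).subtype ⟨π x, LinearMap.mem_range_self π x⟩ := rfl
  have h2 := hψ ⟨π x, LinearMap.mem_range_self π x⟩
  have h3 : e1.symm ⟨π x, LinearMap.mem_range_self π x⟩ = Submodule.Quotient.mk x :=
    π.quotKerEquivRange_symm_apply_image x (LinearMap.mem_range_self π x)
  calc (ψ ∘ₗ U.mkQ) (x : Y) = ψ ((LinearMap.range π).subtype ⟨π x, LinearMap.mem_range_self π x⟩) := by
        rw [LinearMap.comp_apply, h1]
    _ = φ' (e1.symm ⟨π x, LinearMap.mem_range_self π x⟩) := h2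
    _ = φ' (Submodule.Quotient.mk x) := by rw [h3]
    _ = φ x := Submodule.liftQ_apply _ φ _


end AuxLemmas

/-- Let `R` be a commutative Noetherian ring, `p` a prime ideal, and `E` an
injective `R`-module containing `R/p` as an essential submodule (so `E` is an injective hull of
`R/p`). Let `α : A → B` be an `R`-linear map between finitely generated `R`-modules. Then the
precomposition map `Hom_R(B, E) → Hom_R(A, E)` is surjective if and only if the localization of
`ker α` at `p` vanishes. -/
theorem statement7 (R : Type*) [CommRing R] [IsNoetherianRing R]
    (p : Ideal R) (hp : p.IsPrime)
    (E : Type*) [AddCommGroup E] [Module R E]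
    (hE : Module.Injective R E)
    (ι : (R ⧸ p) →ₗ[R] E) (hι : Function.Injective ι)
    (hess : ∀ x : E, x ≠ 0 → ∃ r : R, r • x ≠ 0 ∧ r • x ∈ LinearMap.range ι)
    (A B : Type*) [AddCommGroup A] [Module R A] [AddCommGroup B] [Module R B]
    [Module.Finite R A] [Module.Finite R B] (α : A →ₗ[R] B) :
    Function.Surjective (fun f : B →ₗ[R] E => f.comp α) ↔
      Subsingleton (LocalizedModule p.primeCompl (LinearMap.ker α)) := by
  haveI := hp
  constructor
  · intro hsurj
    by_contra hns
    rw [LocalizedModule.subsingleton_iff] at hns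
    push_neg at hns
    obtain ⟨m, hm⟩ := hns
    set x₀ : A := (m : A) with hx₀
    set τ : R →ₗ[R] A := LinearMap.toSpanSingleton R A x₀ with hτ
    have hJp : LinearMap.ker τ ≤ p := by
      intro r hr
      by_contra hrp
      refine hm r hrp (Subtype.ext ?_)
      simpa [hτ, LinearMap.toSpanSingleton_apply] using hr
    let φ : (LinearMap.range τ) →ₗ[R] E :=
      ι ∘ₗ (Submodule.mapQ (LinearMap.ker τ) p LinearMap.id (by simpa using hJp)) ∘ₗ
        (τ.quotKerEquivRange.symm : _ →ₗ[R] _)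
    obtain ⟨g, hg⟩ := aux_extend hE hι hess (LinearMap.range τ) φ
    obtain ⟨f, hf⟩ := hsurj g
    have hx0mem : x₀ ∈ LinearMap.range τ := ⟨1, by simp [hτ]⟩
    have h2 : φ ⟨x₀, hx0mem⟩ = ι (Submodule.Quotient.mk 1) := by
      have hsym : τ.quotKerEquivRange.symm ⟨x₀, hx0mem⟩ =
          Submodule.Quotient.mk 1 := by
        have : (⟨x₀, hx0mem⟩ : LinearMap.range τ) = ⟨τ 1, LinearMap.mem_range_self τ 1⟩ :=
          Subtype.ext (by simp [hτ])
        rw [this]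
        exact τ.quotKerEquivRange_symm_apply_image 1 (LinearMap.mem_range_self τ 1)
      simp only [φ, LinearMap.comp_apply, LinearEquiv.coe_coe, hsym]
      rw [Submodule.mapQ_apply, LinearMap.id_apply]
    have h3 : g x₀ = 0 := by
      have : g x₀ = f (α x₀) := by rw [← hf]; rfl
      rw [this, LinearMap.mem_ker.mp m.2, map_zero]
    have h4 : (Submodule.Quotient.mk (1 : R) : R ⧸ p) ≠ 0 := by
      rw [Ne, Submodule.Quotient.mk_eq_zero]
      exact fun h => hp.ne_top ((Ideal.eq_top_iff_one p).mpr h)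
    apply h4
    apply hι
    rw [map_zero, ← h2, ← hg ⟨x₀, hx0mem⟩, h3]
  · intro hsub g
    have hkill : LinearMap.ker α ≤ LinearMap.ker g := by
      intro x hx
      obtain ⟨r, hr, hrx⟩ := LocalizedModule.subsingleton_iff.mp hsub ⟨x, hx⟩
      have hrx' : r • x = 0 := congrArg Subtype.val hrx
      have : r • g x = 0 := by rw [← map_smul, hrx', map_zero]
      exact LinearMap.mem_ker.mpr (aux_smul_inj hι hess hr this)
    let gbar : (LinearMap.range α) →ₗ[R] E :=
      (Submodule.liftQ (LinearMap.ker α) g hkill) ∘ₗ (α.quotKerEquivRange.symm : _ →ₗ[R] _)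
    obtain ⟨f, hf⟩ := aux_extend hE hι hess (LinearMap.range α) gbar
    refine ⟨f, ?_⟩
    ext a
    have h1 := hf ⟨α a, LinearMap.mem_range_self α a⟩
    have h2 : α.quotKerEquivRange.symm ⟨α a, LinearMap.mem_range_self α a⟩ =
        Submodule.Quotient.mk a := α.quotKerEquivRange_symm_apply_image a _
    simp only [LinearMap.comp_apply]
    rw [show f (α a) = gbar ⟨α a, LinearMap.mem_range_self α a⟩ from h1]
    simp only [gbar, LinearMap.comp_apply, LinearEquiv.coe_coe, h2]
    exact Submodule.liftQ_apply _ g a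
end

section
/- Let R be a Dedekind domain that is not a field, let p ⊆ R be a nonzero maximal ideal, and let Â_p denote the p-adic completion of R, i.e., the inverse limit of the system (R/p^n)_{n ≥ 1}, regarded as an R-module. Let α : A → B be an R-linear map between finitely generated R-modules, and let C denote the cokernel of the dual map Hom_R(B, R) → Hom_R(A, R) given by precomposition with α. Then the precomposition map Hom_R(B, Â_p) → Hom_R(A, Â_p), f ↦ f ∘ α, is surjective if and only if the localization of C at p is zero, i.e., LocalizedModule p.primeCompl C is trivial. (This expresses that a finitely presented functor 𝒢 with presentation given by α satisfies 𝒢(A_p) ≅ 0 if and only if Covdefect(𝒢) ⊗_R R_p ≅ 0, where A_p is the indecomposable pure-injective given by the completion and Covdefect(𝒢) = coker(Hom_R(α, R)).) -/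
open TensorProduct LinearMap Function

namespace Statement8Aux

variable (R : Type*) [CommRing R]

section Phi

variable (P : Type*) [AddCommGroup P] [Module R P]

/-- The natural map `P ⊗ Hom(M, R) → Hom(M, P)`, `c ⊗ f ↦ (m ↦ f m • c)`. -/
noncomputable def Phi (M : Type*) [AddCommGroup M] [Module R M] :
    P ⊗[R] (M →ₗ[R] R) →ₗ[R] (M →ₗ[R] P) :=
  (LinearEquiv.congrRight (TensorProduct.rid R P)).toLinearMap ∘ₗ
    lTensorHomToHomLTensor (RingHom.id R) M P R

lemma Phi_tmul {M : Type*} [AddCommGroup M] [Module R M] (c : P) (f : M →ₗ[R] R) (m : M) :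
    Phi R P M (c ⊗ₜ f) m = f m • c := by
  simp [Phi, lTensorHomToHomLTensor_apply, LinearEquiv.congrRight]

lemma Phi_naturality {M N : Type*} [AddCommGroup M] [Module R M] [AddCommGroup N] [Module R N]
    (β : M →ₗ[R] N) :
    (lcomp R P β) ∘ₗ Phi R P N = Phi R P M ∘ₗ lTensor P (lcomp R R β) := by
  apply TensorProduct.ext'
  intro c f
  apply LinearMap.ext
  intro m
  simp [Phi_tmul, lcomp_apply]

lemma Phi_bijective_free (M : Type*) [AddCommGroup M] [Module R M]
    [Module.Free R M] [Module.Finite R M] : Function.Bijective (Phi R P M) := by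
  have h : Phi R P M = (LinearEquiv.congrRight (TensorProduct.rid R P)).toLinearMap ∘ₗ
      (lTensorHomEquivHomLTensor R M P R).toLinearMap := by
    rw [lTensorHomEquivHomLTensor_toLinearMap]
    rfl
  rw [h]
  simp only [LinearMap.coe_comp, LinearEquiv.coe_coe]
  exact (LinearEquiv.congrRight (TensorProduct.rid R P)).bijective.comp
    (lTensorHomEquivHomLTensor R M P R).bijective

/-- Factoring a linear map through a surjection whose kernel it kills. -/
lemma comp_factor {L M Q : Type*} [AddCommGroup L] [Module R L] [AddCommGroup M] [Module R M]
    [AddCommGroup Q] [Module R Q] (π : L →ₗ[R] M) (hπ : Function.Surjective π)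
    (f : L →ₗ[R] Q) (hle : ker π ≤ ker f) : ∃ h : M →ₗ[R] Q, h ∘ₗ π = f := by
  let e := π.quotKerEquivOfSurjective hπ
  refine ⟨(ker π).liftQ f hle ∘ₗ e.symm.toLinearMap, ?_⟩
  apply LinearMap.ext
  intro x
  have he : e (Submodule.Quotient.mk x) = π x := by
    simp [e, LinearMap.quotKerEquivOfSurjective]
  have hsy : e.symm (π x) = Submodule.Quotient.mk x := by
    rw [LinearEquiv.symm_apply_eq, he]
  simp only [LinearMap.coe_comp, Function.comp_apply, LinearEquiv.coe_coe, hsy]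
  rfl

/-- Left exactness of `Hom(-, Q)` : if `K → L → M → 0` is exact then
`Hom(M,Q) → Hom(L,Q) → Hom(K,Q)` is exact. -/
lemma exact_dual {K L M : Type*} [AddCommGroup K] [Module R K] [AddCommGroup L] [Module R L]
    [AddCommGroup M] [Module R M] (Q : Type*) [AddCommGroup Q] [Module R Q]
    (g : K →ₗ[R] L) (π : L →ₗ[R] M) (hgπ : Function.Exact g π)
    (hπ : Function.Surjective π) :
    Function.Exact (lcomp R Q π) (lcomp R Q g) := by
  intro f
  constructor
  · intro hf
    have hle : ker π ≤ ker f := by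
      intro x hx
      obtain ⟨y, rfl⟩ := (hgπ x).mp hx
      have : (lcomp R Q g f) y = 0 := by rw [hf]; rfl
      simpa [lcomp_apply] using this
    obtain ⟨h, hh⟩ := comp_factor R π hπ f hle
    exact ⟨h, by ext x; simpa [lcomp_apply] using congrArg (fun u => u x) hh⟩
  · rintro ⟨h, rfl⟩
    ext x
    simp [lcomp_apply, hgπ.apply_apply_eq_zero x]

/-- Surjectivity of `lcomp π` into `Q` is injectivity of precomposition with a surjection. -/
lemma lcomp_injective {L M Q : Type*} [AddCommGroup L] [Module R L] [AddCommGroup M] [Module R M]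
    [AddCommGroup Q] [Module R Q] (π : L →ₗ[R] M) (hπ : Function.Surjective π) :
    Function.Injective (lcomp R Q π) := by
  intro f g hfg
  ext m
  obtain ⟨x, rfl⟩ := hπ m
  exact congrArg (fun u => u x) hfg

/-- The map `Phi` is bijective for finite modules over a Noetherian ring,
with flat coefficients. -/
lemma Phi_bijective [IsNoetherianRing R] [Module.Flat R P]
    (M : Type*) [AddCommGroup M] [Module R M] [Module.Finite R M] :
    Function.Bijective (Phi R P M) := by
  obtain ⟨l, π, hπ⟩ := Module.Finite.exists_fin' R M
  haveI : Module.Finite R (ker π) :=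
    Module.finite_def.mpr (IsNoetherian.noetherian _)
  obtain ⟨k, g₀, hg₀⟩ := Module.Finite.exists_fin' R (ker π : Submodule R (Fin l → R))
  set g : (Fin k → R) →ₗ[R] (Fin l → R) := (ker π).subtype ∘ₗ g₀ with hg
  have hrange : range g = ker π := by
    rw [hg, LinearMap.range_comp, LinearMap.range_eq_top.mpr hg₀, Submodule.map_top,
      Submodule.range_subtype]
  have hgπ : Function.Exact g π := LinearMap.exact_iff.mpr hrange.symm
  -- naturality squares
  have natπ := Phi_naturality R P π
  have natg := Phi_naturality R P g
  have hL : Function.Bijective (Phi R P (Fin l → R)) := Phi_bijective_free R P _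
  have hK : Function.Bijective (Phi R P (Fin k → R)) := Phi_bijective_free R P _
  -- injectivity
  have hinj : Function.Injective (Phi R P M) := by
    have h1 : Function.Injective (lcomp R R π) := lcomp_injective R π hπ
    have h2 : Function.Injective (lTensor P (lcomp R R π)) :=
      Module.Flat.lTensor_preserves_injective_linearMap _ h1
    have h3 : Function.Injective (Phi R P (Fin l → R) ∘ₗ lTensor P (lcomp R R π)) :=
      hL.injective.comp h2
    rw [← natπ] at h3
    exact fun x y hxy => h3 (by simp only [LinearMap.coe_comp, Function.comp_apply, hxy])
  refine ⟨hinj, ?_⟩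
  -- surjectivity
  intro φ
  obtain ⟨x, hx⟩ := hL.surjective (lcomp R P π φ)
  -- the image of x in P ⊗ Hom(R^k, R) vanishes
  have hy : lTensor P (lcomp R R g) x = 0 := by
    apply hK.injective
    have := congrArg (fun u => u x) (Phi_naturality R P g)
    simp only [LinearMap.coe_comp, Function.comp_apply] at this
    rw [← this, hx]
    have : lcomp R P g (lcomp R P π φ) = 0 := by
      ext z
      simp [lcomp_apply, hgπ.apply_apply_eq_zero]
    rw [this]
    simp
  -- exactness of P ⊗ Hom(M,R) → P ⊗ Hom(R^l,R) → P ⊗ Hom(R^k,R)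
  have hex : Function.Exact (lTensor P (lcomp R R π)) (lTensor P (lcomp R R g)) :=
    Module.Flat.lTensor_exact P (exact_dual R R g π hgπ hπ)
  obtain ⟨z, hz⟩ := (hex x).mp hy
  refine ⟨z, ?_⟩
  apply lcomp_injective R π hπ
  have := congrArg (fun u => u z) natπ
  simp only [LinearMap.coe_comp, Function.comp_apply] at this
  rw [this, hz, hx]

end Phi

/-- For flat `P`, surjectivity of `lTensor P f` is equivalent to triviality of
`P ⊗ coker f`. -/
lemma surjective_lTensor_iff_subsingleton (P : Type*) [AddCommGroup P] [Module R P]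
    [Module.Flat R P] {X Y : Type*} [AddCommGroup X] [Module R X] [AddCommGroup Y] [Module R Y]
    (f : X →ₗ[R] Y) :
    Function.Surjective (lTensor P f) ↔ Subsingleton (P ⊗[R] (Y ⧸ LinearMap.range f)) := by
  have hexact : Function.Exact f (LinearMap.range f).mkQ :=
    LinearMap.exact_iff.mpr (Submodule.ker_mkQ _)
  have hT : Function.Exact (lTensor P f) (lTensor P (LinearMap.range f).mkQ) :=
    Module.Flat.lTensor_exact P hexact
  constructor
  · intro hsurj
    refine (subsingleton_iff_forall_eq 0).mpr fun x => ?_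
    obtain ⟨y, rfl⟩ := LinearMap.lTensor_surjective P (Submodule.mkQ_surjective _) x
    obtain ⟨z, rfl⟩ := hsurj y
    exact hT.apply_apply_eq_zero z
  · intro hsub y
    exact (hT y).mp (Subsingleton.elim _ _)

/-- Transfer of surjectivity through the natural isomorphism `Phi`. -/
lemma surjective_lcomp_iff_lTensor [IsNoetherianRing R]
    (P : Type*) [AddCommGroup P] [Module R P] [Module.Flat R P]
    {A B : Type*} [AddCommGroup A] [Module R A] [AddCommGroup B] [Module R B]
    [Module.Finite R A] [Module.Finite R B] (α : A →ₗ[R] B) :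
    Function.Surjective (lcomp R P α) ↔
      Function.Surjective (lTensor P (lcomp R R α)) := by
  have nat := Phi_naturality R P α
  have hA := Phi_bijective R P A
  have hB := Phi_bijective R P B
  constructor
  · intro hs x
    obtain ⟨ψ, hψ⟩ := hs (Phi R P A x)
    obtain ⟨y, rfl⟩ := hB.surjective ψ
    have := congrArg (fun u => u y) nat
    simp only [LinearMap.coe_comp, Function.comp_apply] at this
    refine ⟨y, hA.injective ?_⟩
    rw [← this, hψ]
  · intro hs φ
    obtain ⟨x, hx⟩ := hA.surjective φ
    obtain ⟨y, hy⟩ := hs x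
    refine ⟨Phi R P B y, ?_⟩
    have := congrArg (fun u => u y) nat
    simp only [LinearMap.coe_comp, Function.comp_apply] at this
    rw [this, hy, hx]

/-- Key lemma: for a finite module `C` over a Noetherian ring (in the same universe),
`AdicCompletion p R ⊗ C` is trivial iff the localization of `C` at `p` is trivial. -/
lemma key {R : Type*} [CommRing R] [IsNoetherianRing R] (p : Ideal R) (hp : p.IsMaximal)
    (C : Type _) [AddCommGroup C] [Module R C] [Module.Finite R C]
    (h : Nonempty ((AdicCompletion p R ⊗[R] C) ≃ (AdicCompletion p C))) :
    Subsingleton (AdicCompletion p R ⊗[R] C) ↔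
      Subsingleton (LocalizedModule p.primeCompl C) := by
  have step3 : Subsingleton (AdicCompletion p R ⊗[R] C) ↔ Subsingleton (AdicCompletion p C) :=
    h.some.subsingleton_congr
  have smul_top_eq : ∀ (h : (⊤ : Submodule R C) ≤ p • ⊤) (n : ℕ),
      (p ^ n • ⊤ : Submodule R C) = ⊤ := by
    intro h n
    have hptop : (p • ⊤ : Submodule R C) = ⊤ := le_antisymm le_top h
    induction n with
    | zero => simp
    | succ n ih =>
      rw [pow_succ, ← Ideal.smul_eq_mul, Submodule.smul_assoc, hptop, ih]
  have step4 : Subsingleton (AdicCompletion p C) ↔ (⊤ : Submodule R C) ≤ p • ⊤ := by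
    constructor
    · intro hsub
      have h1 : Subsingleton (C ⧸ (p ^ 1 • ⊤ : Submodule R C)) :=
        (AdicCompletion.eval_surjective p C 1).subsingleton
      have h2 := (Submodule.Quotient.subsingleton_iff).mp h1
      rw [pow_one] at h2
      exact h2.ge
    · intro h
      have hq : ∀ n : ℕ, Subsingleton (C ⧸ (p ^ n • ⊤ : Submodule R C)) := fun n =>
        (Submodule.Quotient.subsingleton_iff).mpr (smul_top_eq h n)
      constructor
      intro x y
      apply AdicCompletion.ext
      intro n
      haveI := hq n
      exact Subsingleton.elim _ _
  have step5 : (⊤ : Submodule R C) ≤ p • ⊤ ↔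
      Subsingleton (LocalizedModule p.primeCompl C) := by
    constructor
    · intro h
      obtain ⟨r, hr1, hr0⟩ :=
        Submodule.exists_sub_one_mem_and_smul_eq_zero_of_fg_of_le_smul p ⊤
          (IsNoetherian.noetherian _) h
      have hrp : r ∈ p.primeCompl := by
        intro hrmem
        have h1 : (1 : R) ∈ p := by
          have := p.sub_mem hrmem hr1
          simpa using this
        exact hp.ne_top (p.eq_top_of_isUnit_mem h1 isUnit_one)
      rw [LocalizedModule.subsingleton_iff]
      exact fun m => ⟨r, hrp, hr0 m Submodule.mem_top⟩
    · intro hsub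
      rw [LocalizedModule.subsingleton_iff] at hsub
      intro c _
      obtain ⟨r, hr, hrc⟩ := hsub c
      obtain ⟨a, i, hi, hai⟩ := hp.exists_inv hr
      have hc : c = i • c := by
        calc c = (a * r + i) • c := by rw [hai, one_smul]
        _ = a • r • c + i • c := by rw [add_smul, mul_smul]
        _ = i • c := by rw [hrc, smul_zero, zero_add]
      rw [hc]
      exact Submodule.smul_mem_smul hi Submodule.mem_top
  rw [step3, step4, step5]

end Statement8Aux

/-- Let `R` be a Dedekind domain that is not a field, `p` a nonzero maximal
ideal, and `Â_p = AdicCompletion p R` the `p`-adic completion of `R`, regarded as an `R`-module.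
Let `α : A → B` be an `R`-linear map between finitely generated `R`-modules, and let `C` be the
cokernel of the dual map `Hom_R(B, R) → Hom_R(A, R)` (precomposition with `α`). Then the
precomposition map `Hom_R(B, Â_p) → Hom_R(A, Â_p)` is surjective if and only if the localization
of `C` at `p` vanishes. -/
theorem statement8 (R : Type*) [CommRing R] [IsDedekindDomain R] (hR : ¬IsField R)
    (p : Ideal R) (hp : p.IsMaximal) (hp0 : p ≠ ⊥)
    (A B : Type*) [AddCommGroup A] [Module R A] [AddCommGroup B] [Module R B]
    [Module.Finite R A] [Module.Finite R B] (α : A →ₗ[R] B) :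
    Function.Surjective
        (fun f : B →ₗ[R] AdicCompletion p R => f.comp α) ↔
      Subsingleton (LocalizedModule p.primeCompl
        ((A →ₗ[R] R) ⧸ LinearMap.range (LinearMap.lcomp R R α))) := by
  classical
  set P := AdicCompletion p R with hP
  haveI : Module.Flat R P := (AdicCompletion.flat_of_isNoetherian (I := p))
  set C := (A →ₗ[R] R) ⧸ LinearMap.range (LinearMap.lcomp R R α) with hC
  haveI : Module.Finite R (A →ₗ[R] R) :=
    Module.finite_def.mpr (IsNoetherian.noetherian _)
  haveI : Module.Finite R C :=
    Module.Finite.of_surjective (LinearMap.range (LinearMap.lcomp R R α)).mkQ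
      (Submodule.mkQ_surjective _)
  -- step 1: surjectivity of precomposition ↔ surjectivity of lTensor
  have step1 : Function.Surjective
      (fun f : B →ₗ[R] P => f.comp α) ↔
        Function.Surjective (LinearMap.lTensor P (LinearMap.lcomp R R α)) := by
    have h : (fun f : B →ₗ[R] P => f.comp α) = ⇑(LinearMap.lcomp R P α) := rfl
    rw [h]
    exact Statement8Aux.surjective_lcomp_iff_lTensor R P α
  -- step 2: surjectivity of lTensor ↔ Subsingleton (P ⊗ C)
  have step2 : Function.Surjective (LinearMap.lTensor P (LinearMap.lcomp R R α)) ↔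
      Subsingleton (P ⊗[R] C) :=
    Statement8Aux.surjective_lTensor_iff_subsingleton R P (LinearMap.lcomp R R α)
  -- replace C by a same-universe model C'
  obtain ⟨n, π, hπ⟩ := Module.Finite.exists_fin' R C
  set C' := ((Fin n → R) ⧸ LinearMap.ker π) with hC'
  let e : C' ≃ₗ[R] C := π.quotKerEquivOfSurjective hπ
  haveI : Module.Finite R C' :=
    Module.Finite.of_surjective (LinearMap.ker π).mkQ (Submodule.mkQ_surjective _)
  have t1 : Subsingleton (P ⊗[R] C) ↔ Subsingleton (P ⊗[R] C') :=
    (TensorProduct.congr (LinearEquiv.refl R P) e.symm).toEquiv.subsingleton_congr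
  have t2 : Subsingleton (LocalizedModule p.primeCompl C') ↔
      Subsingleton (LocalizedModule p.primeCompl C) := by
    rw [LocalizedModule.subsingleton_iff, LocalizedModule.subsingleton_iff]
    constructor
    · intro h m
      obtain ⟨r, hr, h0⟩ := h (e.symm m)
      refine ⟨r, hr, ?_⟩
      have := congrArg e h0
      simpa [map_smul] using this
    · intro h m'
      obtain ⟨r, hr, h0⟩ := h (e m')
      refine ⟨r, hr, ?_⟩
      have := congrArg e.symm h0
      simpa [map_smul] using this
  have tkey : Subsingleton (P ⊗[R] C') ↔ Subsingleton (LocalizedModule p.primeCompl C') :=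
    Statement8Aux.key p hp C'
      ⟨(AdicCompletion.ofTensorProductEquivOfFiniteNoetherian p C').toEquiv⟩
  exact step1.trans (step2.trans (t1.trans (tkey.trans t2)))
end

section
/- Let R be a Dedekind domain that is not a field, let p and q be nonzero maximal ideals of R, and let l, n ≥ 1 be natural numbers. Then the length of the R-module Hom_R(R/p^l, R/q^n) equals min(l, n) if p = q, and equals 0 if p ≠ q. -/
/-- The length of a module: the supremum of the lengths of (strictly increasing finite) chains
of submodules, valued in `ℕ∞`. -/
noncomputable def Module.lengthLT (R M : Type*) [Ring R] [AddCommGroup M] [Module R M] : ℕ∞ :=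
  ⨆ s : LTSeries (Submodule R M), (s.length : ℕ∞)

/- **Statement 9.** Let `R` be a Dedekind domain that is not a field, let `p` and `q` be nonzero
maximal ideals of `R`, and let `l, n ≥ 1`. Then the length of the `R`-module
`Hom_R(R/p^l, R/q^n)` equals `min l n` if `p = q` and `0` otherwise. -/
section helpers
variable {R : Type*} [CommRing R]

lemma length_le_of_equiv {M N : Type*} [AddCommGroup M] [Module R M] [AddCommGroup N]
    [Module R N] (e : M ≃ₗ[R] N) : Module.lengthLT R M ≤ Module.lengthLT R N := by
  refine iSup_le fun s => ?_
  refine le_iSup_of_le (s.map (Submodule.orderIsoMapComap e) (Submodule.orderIsoMapComap e).strictMono) ?_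
  simp [LTSeries.map]

lemma length_congr {M N : Type*} [AddCommGroup M] [Module R M] [AddCommGroup N] [Module R N]
    (e : M ≃ₗ[R] N) : Module.lengthLT R M = Module.lengthLT R N :=
  le_antisymm (length_le_of_equiv e) (length_le_of_equiv e.symm)

lemma length_of_subsingleton {M : Type*} [AddCommGroup M] [Module R M] [Subsingleton M] :
    Module.lengthLT R M = 0 := by
  haveI : Subsingleton (Submodule R M) :=
    ⟨fun A B => by ext x; simp [Subsingleton.elim x 0]⟩
  refine le_antisymm (iSup_le fun s => ?_) (zero_le)
  have hs : s.length = 0 := by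
    by_contra h
    have hstep := s.step ⟨0, Nat.pos_of_ne_zero h⟩
    exact absurd (Subsingleton.elim _ _) (show s.toFun _ < s.toFun _ from hstep).ne
  simp [hs]

variable [IsDedekindDomain R]

lemma aux_classify (p : Ideal R) (hp0 : p ≠ ⊥) (hpm : p.IsMaximal) {m : ℕ} {J : Ideal R}
    (hJ : p ^ m ≤ J) : ∃ i ≤ m, J = p ^ i := by
  have hprime : Prime p := Ideal.prime_of_isPrime hp0 hpm.isPrime
  obtain ⟨i, hi, hassoc⟩ := (dvd_prime_pow hprime m).mp (Ideal.dvd_iff_le.mpr hJ)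
  exact ⟨i, hi, associated_iff_eq.mp hassoc⟩

lemma aux_mult (p : Ideal R) (hp0 : p ≠ ⊥) (hpm : p.IsMaximal) {a r : R} {s t : ℕ}
    (ha : a ∈ p ^ s) (ha' : a ∉ p ^ (s + 1)) (hra : r * a ∈ p ^ (s + t)) : r ∈ p ^ t := by
  rcases eq_or_ne r 0 with rfl | hr
  · exact zero_mem _
  have hprime : Prime p := Ideal.prime_of_isPrime hp0 hpm.isPrime
  have key : ∀ (x : R) (k : ℕ), x ∈ p ^ k ↔ p ^ k ∣ Ideal.span {x} := fun x k => by
    rw [Ideal.dvd_iff_le, Ideal.span_singleton_le_iff_mem]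
  have h1 : (s : ℕ∞) ≤ emultiplicity p (Ideal.span {a}) :=
    pow_dvd_iff_le_emultiplicity.mp ((key a s).mp ha)
  have h2 : emultiplicity p (Ideal.span {a}) < ((s + 1 : ℕ) : ℕ∞) :=
    emultiplicity_lt_iff_not_dvd.mpr (fun h => ha' ((key a (s+1)).mpr h))
  have hμa : emultiplicity p (Ideal.span {a}) = (s : ℕ∞) := by
    refine le_antisymm ?_ h1
    have := h2
    push_cast at this
    exact Order.le_of_lt_add_one this
  have h3 : ((s + t : ℕ) : ℕ∞) ≤ emultiplicity p (Ideal.span {r} * Ideal.span {a}) := by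
    rw [Ideal.span_singleton_mul_span_singleton]
    exact pow_dvd_iff_le_emultiplicity.mp ((key (r * a) (s + t)).mp hra)
  rw [emultiplicity_mul hprime, hμa] at h3
  have h4 : (t : ℕ∞) ≤ emultiplicity p (Ideal.span {r}) := by
    have hs : (s : ℕ∞) ≠ ⊤ := by simp
    rw [add_comm (emultiplicity p (Ideal.span {r}))] at h3
    push_cast at h3
    exact (WithTop.add_le_add_iff_left hs).mp h3
  exact (key r t).mpr (pow_dvd_of_le_emultiplicity h4)

lemma aux_sup (p : Ideal R) (hp0 : p ≠ ⊥) (hpm : p.IsMaximal) {x : R} {a b : ℕ} (hab : a ≤ b)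
    (hx : x ∈ p ^ a) (hx' : x ∉ p ^ (a + 1)) : Ideal.span {x} ⊔ p ^ b = p ^ a := by
  obtain ⟨i, hi, hJ⟩ := aux_classify p hp0 hpm (le_sup_right : p ^ b ≤ Ideal.span {x} ⊔ p ^ b)
  have hia : i ≤ a := by
    by_contra h
    push_neg at h
    have hxi : x ∈ p ^ i := hJ ▸ Submodule.mem_sup_left (Ideal.mem_span_singleton_self x)
    exact hx' (Ideal.pow_le_pow_right h hxi)
  refine le_antisymm (sup_le (by rwa [Ideal.span_singleton_le_iff_mem]) (Ideal.pow_le_pow_right hab)) ?_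
  calc p ^ a ≤ p ^ i := Ideal.pow_le_pow_right hia
    _ = _ := hJ.symm

lemma length_quot_pow (p : Ideal R) (hp0 : p ≠ ⊥) (hpm : p.IsMaximal)
    (m : ℕ) : Module.lengthLT R (R ⧸ (p ^ m)) = m := by
  have hanti := Ideal.pow_right_strictAnti p hp0 hpm.ne_top
  apply le_antisymm
  · refine iSup_le fun s => ?_
    have key : ∀ i : Fin (s.length + 1),
        ∃ e ≤ m, ((Submodule.comapMkQRelIso (p ^ m)) (s i) : Ideal R) = p ^ e :=
      fun i => aux_classify p hp0 hpm ((Submodule.comapMkQRelIso (p ^ m)) (s i)).2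
    choose e he hpe using key
    have hmono : ∀ i j : Fin (s.length + 1), i < j → e j < e i := by
      intro i j hij
      have h1 : ((Submodule.comapMkQRelIso (p ^ m)) (s i) : Ideal R) <
          ((Submodule.comapMkQRelIso (p ^ m)) (s j) : Ideal R) := by
        exact_mod_cast (Submodule.comapMkQRelIso (p ^ m)).lt_iff_lt.mpr (s.strictMono hij)
      rw [hpe i, hpe j] at h1
      exact hanti.lt_iff_gt.mp h1
    have hinj : Function.Injective
        (fun i : Fin (s.length + 1) => (⟨m - e i, by omega⟩ : Fin (m + 1))) := by
      have : StrictMono (fun i : Fin (s.length + 1) => (⟨m - e i, by omega⟩ : Fin (m + 1))) := by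
        intro i j hij
        have h1 : e j < e i := hmono i j hij
        have h2 : e i ≤ m := he i
        exact Fin.mk_lt_mk.mpr (Nat.sub_lt_sub_left (lt_of_lt_of_le h1 h2) h1)
      exact this.injective
    have := Fintype.card_le_of_injective _ hinj
    exact_mod_cast (by simpa using this : s.length ≤ m)
  · let c : LTSeries (Submodule R (R ⧸ p ^ m)) :=
      { length := m
        toFun := fun i => (Submodule.comapMkQRelIso (p ^ m)).symm
            ⟨p ^ (m - (i : ℕ)), Ideal.pow_le_pow_right (Nat.sub_le m i)⟩
        step := fun i => by
          apply (Submodule.comapMkQRelIso (p ^ m)).symm.lt_iff_lt.mpr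
          refine Subtype.mk_lt_mk.mpr ?_
          apply hanti
          have : (i : ℕ) < m := i.isLt
          simp only [Fin.coe_castSucc, Fin.val_succ]
          omega }
    refine le_iSup_of_le c ?_
    simp [c]

end helpers

open Classical in
theorem statement9 (R : Type*) [CommRing R] [IsDedekindDomain R] (hR : ¬IsField R)
    (p q : Ideal R) (hp : p.IsMaximal) (hq : q.IsMaximal) (hp0 : p ≠ ⊥) (hq0 : q ≠ ⊥)
    (l n : ℕ) (hl : 1 ≤ l) (hn : 1 ≤ n) :
    Module.lengthLT R ((R ⧸ p ^ l) →ₗ[R] (R ⧸ q ^ n)) =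
      if p = q then ((min l n : ℕ) : ℕ∞) else 0 := by
  split_ifs with hpq
  · -- p = q
    subst hpq
    set m := min l n with hm
    have hmn : m ≤ n := min_le_right l n
    have hml : m ≤ l := min_le_left l n
    obtain ⟨x, hx, hx'⟩ := Ideal.exists_mem_pow_notMem_pow_succ p hp0 hp.ne_top (n - m)
    have hker : p ^ l ≤ LinearMap.ker
        ((p ^ n).mkQ ∘ₗ LinearMap.toSpanSingleton R R x) := by
      intro a hal
      simp only [LinearMap.mem_ker, LinearMap.comp_apply, LinearMap.toSpanSingleton_apply,
        Submodule.mkQ_apply, Submodule.Quotient.mk_eq_zero, smul_eq_mul]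
      have h1 : a * x ∈ p ^ l * p ^ (n - m) := Ideal.mul_mem_mul hal hx
      rw [← pow_add] at h1
      exact Ideal.pow_le_pow_right (by omega) h1
    set g1 : (R ⧸ p ^ l) →ₗ[R] (R ⧸ p ^ n) := Submodule.liftQ _ _ hker with hg1
    set Φ : R →ₗ[R] ((R ⧸ p ^ l) →ₗ[R] (R ⧸ p ^ n)) :=
      LinearMap.toSpanSingleton R _ g1 with hΦ
    have hg1mk : ∀ r : R, g1 (Submodule.Quotient.mk r) = Submodule.Quotient.mk (r * x) := by
      intro r
      rw [hg1]
      rw [Submodule.liftQ_apply]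
      simp [smul_eq_mul]
    have hkerΦ : LinearMap.ker Φ = p ^ m := by
      ext c
      simp only [LinearMap.mem_ker]
      constructor
      · intro hc
        have h0 := DFunLike.congr_fun hc (Submodule.Quotient.mk (1 : R))
        rw [hΦ] at h0
        simp only [LinearMap.toSpanSingleton_apply, LinearMap.smul_apply, LinearMap.zero_apply] at h0
        rw [hg1mk 1, one_mul] at h0
        rw [← Submodule.Quotient.mk_smul, smul_eq_mul, Submodule.Quotient.mk_eq_zero] at h0
        have : c * x ∈ p ^ (n - m + m) := by rwa [Nat.sub_add_cancel hmn]
        exact aux_mult p hp0 hp hx hx' this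
      · intro hc
        refine Submodule.linearMap_qext _ (LinearMap.ext fun r => ?_)
        simp only [LinearMap.comp_apply, Submodule.mkQ_apply, LinearMap.zero_apply]
        rw [hΦ]
        simp only [LinearMap.toSpanSingleton_apply, LinearMap.smul_apply]
        rw [hg1mk r, ← Submodule.Quotient.mk_smul, smul_eq_mul, Submodule.Quotient.mk_eq_zero]
        have h1 : c * x ∈ p ^ m * p ^ (n - m) := Ideal.mul_mem_mul hc hx
        rw [← pow_add, Nat.add_sub_cancel' hmn] at h1
        have : c * (r * x) = r * (c * x) := by ring
        rw [this]
        exact Ideal.mul_mem_left _ r h1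
    have hsurj : Function.Surjective Φ := by
      intro f
      obtain ⟨Y, hY⟩ := Submodule.Quotient.mk_surjective _ (f (Submodule.Quotient.mk 1))
      have hann : ∀ b ∈ p ^ l, b * Y ∈ p ^ n := by
        intro b hb
        have h1 : b • (Submodule.Quotient.mk (1 : R) : R ⧸ p ^ l) = 0 := by
          rw [← Submodule.Quotient.mk_smul, smul_eq_mul, mul_one, Submodule.Quotient.mk_eq_zero]
          exact hb
        have h2 : b • f (Submodule.Quotient.mk 1) = 0 := by
          rw [← map_smul, h1, map_zero]
        rw [← hY, ← Submodule.Quotient.mk_smul, smul_eq_mul, Submodule.Quotient.mk_eq_zero] at h2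
        exact h2
      have hY' : Y ∈ p ^ (n - m) := by
        rcases le_or_gt l n with h | h
        · have hml' : m = l := min_eq_left h
          obtain ⟨a, hal, hal'⟩ := Ideal.exists_mem_pow_notMem_pow_succ p hp0 hp.ne_top l
          have h1 : Y * a ∈ p ^ (l + (n - l)) := by
            rw [Nat.add_sub_cancel' h, mul_comm]
            exact hann a hal
          have := aux_mult p hp0 hp hal hal' h1
          rwa [hml']
        · have : n - m = 0 := by omega
          rw [this, pow_zero, Ideal.one_eq_top]
          trivial
      rw [← aux_sup p hp0 hp (Nat.sub_le n m) hx hx'] at hY'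
      obtain ⟨u, hu, v, hv, huv⟩ := Submodule.mem_sup.mp hY'
      obtain ⟨c, hc⟩ := Ideal.mem_span_singleton'.mp hu
      refine ⟨c, Submodule.linearMap_qext _ (LinearMap.ext fun r => ?_)⟩
      simp only [LinearMap.comp_apply, Submodule.mkQ_apply]
      rw [hΦ]
      simp only [LinearMap.toSpanSingleton_apply, LinearMap.smul_apply]
      rw [hg1mk r, ← Submodule.Quotient.mk_smul, smul_eq_mul]
      have hfr : f (Submodule.Quotient.mk r) = Submodule.Quotient.mk (r * Y) := by
        have : (Submodule.Quotient.mk r : R ⧸ p ^ l) = r • Submodule.Quotient.mk 1 := by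
          rw [← Submodule.Quotient.mk_smul, smul_eq_mul, mul_one]
        rw [this, map_smul, ← hY, ← Submodule.Quotient.mk_smul, smul_eq_mul]
      rw [hfr]
      rw [Submodule.Quotient.eq]
      have : c * (r * x) - r * Y = -(r * v) := by
        rw [← huv, ← hc]; ring
      rw [this]
      exact neg_mem (Ideal.mul_mem_left _ r hv)
    have e1 : (R ⧸ p ^ m) ≃ₗ[R] ((R ⧸ p ^ l) →ₗ[R] (R ⧸ p ^ n)) :=
      (Submodule.quotEquivOfEq _ _ hkerΦ.symm).trans (Φ.quotKerEquivOfSurjective hsurj)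
    rw [length_congr e1.symm]
    exact length_quot_pow p hp0 hp m
  · -- p ≠ q
    haveI hsub : Subsingleton ((R ⧸ p ^ l) →ₗ[R] (R ⧸ q ^ n)) := by
      constructor
      intro f g
      suffices h : ∀ f : (R ⧸ p ^ l) →ₗ[R] (R ⧸ q ^ n), f = 0 by rw [h f, h g]
      intro f
      have hco : IsCoprime (p ^ l) (q ^ n) := by
        apply IsCoprime.pow
        rw [Ideal.isCoprime_iff_sup_eq]
        exact Ideal.IsMaximal.coprime_of_ne hp hq hpq
      rw [Ideal.isCoprime_iff_sup_eq] at hco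
      have h1 : (1 : R) ∈ p ^ l ⊔ q ^ n := hco.symm ▸ Submodule.mem_top
      obtain ⟨u, hu, v, hv, huv⟩ := Submodule.mem_sup.mp h1
      have hf1 : f (Submodule.Quotient.mk 1) = 0 := by
        obtain ⟨w, hw⟩ := Submodule.Quotient.mk_surjective _ (f (Submodule.Quotient.mk 1))
        have hus : u • f (Submodule.Quotient.mk 1) = 0 := by
          rw [← map_smul, ← Submodule.Quotient.mk_smul, smul_eq_mul, mul_one]
          rw [show (Submodule.Quotient.mk u : R ⧸ p ^ l) = 0 from
            Submodule.Quotient.mk_eq_zero _ |>.mpr hu, map_zero]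
        have hvs : v • f (Submodule.Quotient.mk 1) = 0 := by
          rw [← hw, ← Submodule.Quotient.mk_smul, smul_eq_mul]
          exact (Submodule.Quotient.mk_eq_zero _).mpr (Ideal.mul_mem_right w _ hv)
        calc f (Submodule.Quotient.mk 1) = (u + v) • f (Submodule.Quotient.mk 1) := by
              rw [huv, one_smul]
          _ = 0 := by rw [add_smul, hus, hvs, add_zero]
      refine Submodule.linearMap_qext _ (LinearMap.ext fun r => ?_)
      simp only [LinearMap.comp_apply, Submodule.mkQ_apply, LinearMap.zero_apply]
      have : (Submodule.Quotient.mk r : R ⧸ p ^ l) = r • Submodule.Quotient.mk 1 := by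
        rw [← Submodule.Quotient.mk_smul, smul_eq_mul, mul_one]
      rw [this, map_smul, hf1, smul_zero]
    exact length_of_subsingleton
end

section
/- Let R be a Dedekind domain that is not a field with fraction field K, let p ⊆ R be a nonzero maximal ideal, and let n ≥ 1. Let M be a finitely generated R-module together with an R-linear isomorphism M ≅ F × ∏_{i ∈ Fin k} R/(q_i^{l_i}), where F is a finitely generated projective R-module, each q_i is a nonzero maximal ideal of R, and each l_i ≥ 1. Then the length of the R-module Hom_R(M, R/p^n) equals n · dim_K (K ⊗_R F) + Σ_{i ∈ Fin k, q_i = p} min(l_i, n). (This is the Hilbert function of the representable functor Hom_R(M, −) at (p, n), computed from the rank and the multiplicities of M.) -/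
open TensorProduct

/-- The length of a module: the supremum of the lengths of (strictly increasing finite) chains
of submodules, valued in `ℕ∞`. -/
noncomputable def Module.length' (R M : Type*) [Ring R] [AddCommGroup M] [Module R M] : ℕ∞ :=
  ⨆ s : LTSeries (Submodule R M), (s.length : ℕ∞)

namespace Statement11Aux

open Order

section Basic

variable {R M N : Type*} [Ring R] [AddCommGroup M] [Module R M] [AddCommGroup N] [Module R N]

instance : Nonempty (LTSeries (Submodule R M)) := ⟨RelSeries.singleton _ ⊥⟩

lemma length_le_of_strictMono (f : Submodule R M → Submodule R N) (hf : StrictMono f) :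
    Module.length' R M ≤ Module.length' R N :=
  iSup_le fun s => le_iSup_of_le (s.map f hf) (by simp [LTSeries.map])

lemma length_eq_of_equiv (e : M ≃ₗ[R] N) : Module.length' R M = Module.length' R N :=
  le_antisymm
    (length_le_of_strictMono _ (Submodule.orderIsoMapComap e).strictMono)
    (length_le_of_strictMono _ (Submodule.orderIsoMapComap e.symm).strictMono)

lemma length_eq_zero_of_subsingleton [Subsingleton M] : Module.length' R M = 0 := by
  have hall : ∀ X Y : Submodule R M, X = Y := fun X Y =>
    SetLike.ext fun x => by rw [Subsingleton.elim x 0]; simp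
  refine le_antisymm (iSup_le fun s => ?_) zero_le
  rcases Nat.eq_zero_or_pos s.length with h | h
  · simp [h]
  · have hs : s.toFun _ < s.toFun _ := s.step ⟨0, h⟩
    rw [hall (s _) (s _)] at hs
    exact absurd hs (lt_irrefl _)

lemma height_le_length (x : Submodule R M) : Order.height x ≤ Module.length' R M :=
  Order.height_le fun p _ => le_iSup (fun s : LTSeries (Submodule R M) => (s.length : ℕ∞)) p

lemma length_le_height_add_height {α β γ : Type*} [Preorder α] [Preorder β] [Preorder γ]
    (f : α → β) (g : α → γ) (hf : Monotone f) (hg : Monotone g)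
    (hfg : ∀ ⦃x y : α⦄, x < y → f x < f y ∨ g x < g y) (u : LTSeries α) :
    (u.length : ℕ∞) ≤ height (f u.last) + height (g u.last) := by
  by_cases hb : height (f u.last) = ⊤
  · simp [hb]
  by_cases hc : height (g u.last) = ⊤
  · simp [hc]
  suffices H : ∀ L : ℕ, ∀ u : LTSeries α, u.length = L →
      height (f u.last) ≠ ⊤ → height (g u.last) ≠ ⊤ →
      (u.length : ℕ∞) ≤ height (f u.last) + height (g u.last) by
    exact H u.length u rfl hb hc
  clear hb hc u
  intro L
  induction L with
  | zero => intro u hL _ _; simp [hL]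
  | succ L ih =>
    intro u hL hb hc
    have h0 : u.length ≠ 0 := by omega
    have hlt : u.eraseLast.last < u.last := u.eraseLast_last_rel_last h0
    have hfe : height (f u.eraseLast.last) ≤ height (f u.last) := height_mono (hf hlt.le)
    have hge : height (g u.eraseLast.last) ≤ height (g u.last) := height_mono (hg hlt.le)
    have hfe' : height (f u.eraseLast.last) ≠ ⊤ := fun h => hb (top_le_iff.mp (h ▸ hfe))
    have hge' : height (g u.eraseLast.last) ≠ ⊤ := fun h => hc (top_le_iff.mp (h ▸ hge))
    have hlen : u.eraseLast.length = L := by simp [RelSeries.eraseLast, hL]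
    have key : (L : ℕ∞) ≤ height (f u.eraseLast.last) + height (g u.eraseLast.last) := by
      have key0 := ih u.eraseLast hlen hfe' hge'
      rw [hlen] at key0
      exact key0
    have key2 : (L : ℕ∞) + 1 ≤
        (height (f u.eraseLast.last) + height (g u.eraseLast.last)) + 1 :=
      add_le_add_left key 1
    rw [hL]
    push_cast
    rcases hfg hlt with h | h
    · have h1 : height (f u.eraseLast.last) + 1 ≤ height (f u.last) :=
        Order.add_one_le_of_lt (height_strictMono h (lt_top_iff_ne_top.mpr hfe'))
      calc (L : ℕ∞) + 1 ≤ _ + 1 := key2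
        _ = (height (f u.eraseLast.last) + 1) + height (g u.eraseLast.last) := by
            rw [add_right_comm]
        _ ≤ height (f u.last) + height (g u.last) := add_le_add h1 hge
    · have h1 : height (g u.eraseLast.last) + 1 ≤ height (g u.last) :=
        Order.add_one_le_of_lt (height_strictMono h (lt_top_iff_ne_top.mpr hge'))
      calc (L : ℕ∞) + 1 ≤ _ + 1 := key2
        _ = height (f u.eraseLast.last) + (height (g u.eraseLast.last) + 1) := by
            rw [add_assoc]
        _ ≤ height (f u.last) + height (g u.last) := add_le_add hfe h1

end Basic

section Basic2

open Order

variable {R M N : Type*} [Ring R] [AddCommGroup M] [Module R M] [AddCommGroup N] [Module R N]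

lemma length_submodule_eq_height (W : Submodule R M) :
    Module.length' R W = Order.height W := by
  apply le_antisymm
  · refine iSup_le fun s => ?_
    have hmap : StrictMono (Submodule.map W.subtype) :=
      Submodule.map_strictMono_of_injective W.injective_subtype
    have hle : (s.map _ hmap).last ≤ W := by
      exact Submodule.map_subtype_le W _
    simpa [LTSeries.map] using Order.length_le_height hle
  · refine Order.height_le fun p hp => ?_
    have hle : ∀ i, p i ≤ W := fun i => by
      rw [← hp]; exact p.monotone (Fin.le_last i)
    have hmc : ∀ (X : Submodule R M), X ≤ W →
        Submodule.map W.subtype (Submodule.comap W.subtype X) = X := fun X hX => by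
      rw [Submodule.map_comap_subtype, inf_eq_right.mpr hX]
    refine le_iSup_of_le ⟨p.length, fun i => Submodule.comap W.subtype (p i), fun i => ?_⟩
      (by simp)
    have h : p.toFun i.castSucc < p.toFun i.succ := p.step i
    refine lt_of_le_of_ne (Submodule.comap_mono h.le) fun heq => h.ne ?_
    have heq' : Submodule.comap W.subtype (p.toFun i.castSucc)
        = Submodule.comap W.subtype (p.toFun i.succ) := heq
    rw [← hmc _ (hle i.castSucc), heq', hmc _ (hle i.succ)]

lemma junction_le {P : Type*} [AddCommGroup P] [Module R P] (s t : LTSeries (Submodule R P))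
    (h : s.last ≤ t.head) : (s.length : ℕ∞) + t.length ≤ Module.length' R P := by
  rcases eq_or_lt_of_le h with h | h
  · refine le_iSup_of_le (s.smash t h) ?_
    simp [RelSeries.smash]
  · refine le_iSup_of_le ((s.snoc t.head h).smash t (RelSeries.last_snoc _ _ _)) ?_
    have : ((s.snoc t.head h).smash t (RelSeries.last_snoc _ _ _)).length
        = s.length + 1 + t.length := by simp [RelSeries.smash]
    rw [this]
    push_cast
    refine le_trans ?_ le_rfl
    gcongr <;> simp

lemma length_prod :
    Module.length' R (M × N) = Module.length' R M + Module.length' R N := by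
  apply le_antisymm
  · refine iSup_le fun u => ?_
    have hfg : ∀ ⦃X Y : Submodule R (M × N)⦄, X < Y →
        X.comap (LinearMap.inl R M N) < Y.comap (LinearMap.inl R M N) ∨
        X.map (LinearMap.snd R M N) < Y.map (LinearMap.snd R M N) := by
      intro X Y hXY
      rcases lt_or_eq_of_le (Submodule.comap_mono (f := LinearMap.inl R M N) hXY.le)
        with h | h
      · exact Or.inl h
      right
      refine lt_of_le_of_ne (Submodule.map_mono hXY.le) fun heq => hXY.ne ?_
      apply le_antisymm hXY.le
      rintro ⟨y1, y2⟩ hy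
      have hmem : y2 ∈ Y.map (LinearMap.snd R M N) := ⟨(y1, y2), hy, rfl⟩
      rw [← heq] at hmem
      obtain ⟨⟨x1, x2⟩, hx, hx2⟩ := hmem
      have hsub : ((y1 - x1, (0 : N)) : M × N) ∈ Y := by
        have hs := Y.sub_mem hy (hXY.le hx)
        simp only [Prod.mk_sub_mk] at hs
        simpa [show y2 - x2 = 0 by rw [← hx2]; exact sub_self _] using hs
      have hy1 : y1 - x1 ∈ Y.comap (LinearMap.inl R M N) := by
        simpa [Submodule.mem_comap] using hsub
      rw [← h] at hy1
      have hX2 : ((y1 - x1, (0 : N)) : M × N) ∈ X := hy1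
      have hxy : ((x1 + (y1 - x1), x2 + 0) : M × N) = (y1, y2) := by
        have h1 : x1 + (y1 - x1) = y1 := by abel
        rw [h1, add_zero, show x2 = y2 from hx2]
      have hadd := X.add_mem hx hX2
      rw [Prod.mk_add_mk] at hadd
      rwa [hxy] at hadd
    refine (length_le_height_add_height _ _
      (fun _ _ h => Submodule.comap_mono h) (fun _ _ h => Submodule.map_mono h)
      hfg u).trans ?_
    exact add_le_add (height_le_length _) (height_le_length _)
  · rw [Module.length', ENat.iSup_add]
    refine iSup_le fun s => ?_
    rw [Module.length', ENat.add_iSup]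
    refine iSup_le fun t => ?_
    have hs : StrictMono (Submodule.map (LinearMap.inl R M N)) :=
      Submodule.map_strictMono_of_injective LinearMap.inl_injective
    have ht : StrictMono (Submodule.comap (LinearMap.snd R M N)) := fun X Y h =>
      (Submodule.comap_lt_comap_iff_of_surjective
        (LinearMap.snd_surjective (R := R) (M := M) (M₂ := N))).mpr h
    have hj : (s.map _ hs).last ≤ (t.map _ ht).head := by
      simp only [LTSeries.map, RelSeries.last, RelSeries.head]
      rintro z hz
      obtain ⟨x, _, rfl⟩ := hz
      exact Submodule.mem_comap.mpr (by simp)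
    have := junction_le (s.map _ hs) (t.map _ ht) hj
    simpa [LTSeries.map] using this

lemma length_pi {k : ℕ} (φ : Fin k → Type*) [∀ i, AddCommGroup (φ i)]
    [∀ i, Module R (φ i)] :
    Module.length' R (∀ i, φ i) = ∑ i, Module.length' R (φ i) := by
  induction k with
  | zero =>
    have : Subsingleton (∀ i : Fin 0, φ i) := ⟨fun a b => funext fun i => i.elim0⟩
    rw [length_eq_zero_of_subsingleton, Finset.univ_eq_empty, Finset.sum_empty]
  | succ k ih =>
    have e : (∀ i, φ i) ≃ₗ[R] φ 0 × (∀ i : Fin k, φ i.succ) :=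
      { toFun := fun f => (f 0, fun i => f i.succ)
        invFun := fun x => Fin.cons x.1 x.2
        map_add' := fun f g => rfl
        map_smul' := fun c f => rfl
        left_inv := fun f => Fin.cons_self_tail f
        right_inv := fun x => by simp }
    rw [length_eq_of_equiv e, length_prod, ih, Fin.sum_univ_succ]

end Basic2

section Dedekind

open Order

variable {R : Type*} [CommRing R] [IsDedekindDomain R]
variable (p : Ideal R)

lemma comap_map_mkQ (n : ℕ) (J : Ideal R) (hJ : (p ^ n : Ideal R) ≤ J) :
    Submodule.comap (p ^ n : Ideal R).mkQ (Submodule.map (p ^ n : Ideal R).mkQ J) = J := by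
  rw [Submodule.comap_map_eq, Submodule.ker_mkQ, sup_eq_left.mpr hJ]

lemma submodule_quot_classify (hp : p.IsPrime) (hp0 : p ≠ ⊥) (n : ℕ)
    (X : Submodule R (R ⧸ (p ^ n : Ideal R))) :
    ∃ i ≤ n, X = Submodule.map (p ^ n : Ideal R).mkQ (p ^ i : Ideal R) := by
  set J : Ideal R := Submodule.comap (p ^ n : Ideal R).mkQ X with hJdef
  have hJn : (p ^ n : Ideal R) ≤ J := by
    intro x hx
    have hx0 : (p ^ n : Ideal R).mkQ x = 0 := by
      rw [Submodule.mkQ_apply, Submodule.Quotient.mk_eq_zero]; exact hx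
    show (p ^ n : Ideal R).mkQ x ∈ X
    rw [hx0]; exact X.zero_mem
  have hdvd : J ∣ p ^ n := Ideal.dvd_iff_le.mpr hJn
  obtain ⟨i, hi, hass⟩ := (dvd_prime_pow (Ideal.prime_of_isPrime hp0 hp) n).mp hdvd
  refine ⟨i, hi, ?_⟩
  have hJp : J = p ^ i := associated_iff_eq.mp hass
  rw [← hJp, hJdef, Submodule.map_comap_eq_of_surjective (Submodule.mkQ_surjective _) X]

lemma height_map_pow (hp0 : p ≠ ⊥) (hp : p.IsPrime) (hpt : p ≠ ⊤) {n i : ℕ} (hi : i ≤ n) :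
    Order.height (Submodule.map (p ^ n : Ideal R).mkQ (p ^ i : Ideal R))
      = ((n - i : ℕ) : ℕ∞) := by
  have hanti : StrictAnti (fun j : ℕ => p ^ j) := Ideal.pow_right_strictAnti p hp0 hpt
  have hmaplt : ∀ {I1 I2 : Ideal R}, (p ^ n : Ideal R) ≤ I1 → I1 < I2 →
      Submodule.map (p ^ n : Ideal R).mkQ I1 < Submodule.map (p ^ n : Ideal R).mkQ I2 := by
    intro I1 I2 h1 h12
    refine lt_of_le_of_ne (Submodule.map_mono h12.le) fun heq => h12.ne ?_
    have h2 : (p ^ n : Ideal R) ≤ I2 := h1.trans h12.le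
    rw [← comap_map_mkQ p n I1 h1, heq, comap_map_mkQ p n I2 h2]
  apply le_antisymm
  · refine Order.height_le fun u hu => ?_
    have hcl := fun j : Fin (u.length + 1) => submodule_quot_classify p hp hp0 n (u j)
    choose c hcn hc using hcl
    have hkey : ∀ {a b : Fin (u.length + 1)}, u a < u b → c b < c a := by
      intro a b hab
      have h1 : (p ^ (c a) : Ideal R) ≤ p ^ (c b) := by
        have h2 := Submodule.comap_mono (f := (p ^ n : Ideal R).mkQ) hab.le
        rw [hc a, hc b] at h2
        rwa [comap_map_mkQ p n _ (Ideal.pow_le_pow_right (hcn a)),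
          comap_map_mkQ p n _ (Ideal.pow_le_pow_right (hcn b))] at h2
      have hlt : (p ^ (c a) : Ideal R) < p ^ (c b) :=
        lt_of_le_of_ne h1 fun h => hab.ne (by rw [hc a, hc b, h])
      exact hanti.lt_iff_gt.mp hlt
    have hstep : ∀ j : Fin u.length, c j.succ < c j.castSucc :=
      fun j => hkey (u.step j)
    have hbound : ∀ j : Fin (u.length + 1), c j + j.val ≤ c 0 := by
      intro j
      induction j using Fin.induction with
      | zero => simp
      | succ j ih =>
        have h1 := hstep j
        simp only [Fin.val_succ, Fin.coe_castSucc] at *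
        omega
    have hlast : c (Fin.last u.length) = i := by
      have h1 := hc (Fin.last u.length)
      have h2 : u (Fin.last u.length) = Submodule.map (p ^ n : Ideal R).mkQ (p ^ i : Ideal R) := hu
      rw [h2] at h1
      have h3 : (p ^ i : Ideal R) = p ^ (c (Fin.last u.length)) := by
        rw [← comap_map_mkQ p n (p ^ i) (Ideal.pow_le_pow_right hi), h1,
          comap_map_mkQ p n _ (Ideal.pow_le_pow_right (hcn _))]
      exact (hanti.injective h3).symm
    have hfin := hbound (Fin.last u.length)
    have hc0 := hcn 0
    simp only [Fin.val_last, hlast] at hfin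
    exact Nat.cast_le.mpr (by omega)
  · let v : LTSeries (Submodule R (R ⧸ (p ^ n : Ideal R))) :=
      ⟨n - i, fun j => Submodule.map (p ^ n : Ideal R).mkQ (p ^ (n - j.val) : Ideal R),
        fun j => by
          refine hmaplt (Ideal.pow_le_pow_right (Nat.sub_le n _)) ?_
          refine hanti ?_
          have hj := j.2
          simp only [Fin.coe_castSucc, Fin.val_succ]
          omega⟩
    have hlast : v.last = Submodule.map (p ^ n : Ideal R).mkQ (p ^ i : Ideal R) := by
      show Submodule.map _ (p ^ (n - (Fin.last (n - i)).val) : Ideal R) = _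
      rw [Fin.val_last, Nat.sub_sub_self hi]
    calc ((n - i : ℕ) : ℕ∞) = (v.length : ℕ∞) := rfl
      _ ≤ height v.last := Order.length_le_height_last
      _ = _ := by rw [hlast]

lemma length_quot_pow (hp0 : p ≠ ⊥) (hp : p.IsPrime) (hpt : p ≠ ⊤) (n : ℕ) :
    Module.length' R (R ⧸ (p ^ n : Ideal R)) = (n : ℕ∞) := by
  have h0 : (⊤ : Submodule R (R ⧸ (p ^ n : Ideal R)))
      = Submodule.map (p ^ n : Ideal R).mkQ (p ^ 0 : Ideal R) := by
    rw [pow_zero, Ideal.one_eq_top]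
    rw [Submodule.map_top, Submodule.range_mkQ]
  have hh := height_map_pow p hp0 hp hpt (Nat.zero_le n)
  rw [← h0] at hh
  rw [length_eq_of_equiv (Submodule.topEquiv
    (R := R) (M := R ⧸ (p ^ n : Ideal R))).symm, length_submodule_eq_height, hh]
  simp

end Dedekind

section Torsion

open Order

variable {R : Type*} [CommRing R]

/-- `Hom(R/I, N)` is isomorphic to the `I`-torsion of `N`. -/
noncomputable def homQuotEquivTorsion (I : Ideal R) (N : Type*) [AddCommGroup N]
    [Module R N] :
    ((R ⧸ I) →ₗ[R] N) ≃ₗ[R] Submodule.torsionBySet R N I where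
  toFun φ := ⟨φ (Submodule.Quotient.mk 1), (Submodule.mem_torsionBySet_iff _ _).mpr fun a => by
    have h1 : (a : R) • (Submodule.Quotient.mk (1 : R) : R ⧸ I)
        = Submodule.Quotient.mk ((a : R) • (1 : R)) := rfl
    have h2 : ((a : R) • (1 : R)) = (a : R) := by rw [smul_eq_mul, mul_one]
    rw [← map_smul, h1, h2, (Submodule.Quotient.mk_eq_zero I).mpr a.2, map_zero]⟩
  invFun x := Submodule.liftQ I (LinearMap.toSpanSingleton R N (x : N)) fun a ha => by
    have := (Submodule.mem_torsionBySet_iff _ _).mp x.2 ⟨a, ha⟩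
    simpa [LinearMap.mem_ker, LinearMap.toSpanSingleton_apply] using this
  map_add' φ ψ := Subtype.ext rfl
  map_smul' c φ := Subtype.ext rfl
  left_inv φ := by
    refine Submodule.linearMap_qext I (LinearMap.ext fun r => ?_)
    have h1 : (Submodule.Quotient.mk r : R ⧸ I) = r • Submodule.Quotient.mk (1 : R) := by
      rw [← Submodule.Quotient.mk_smul, smul_eq_mul, mul_one]
    simp only [LinearMap.comp_apply, Submodule.mkQ_apply, Submodule.liftQ_apply,
      LinearMap.toSpanSingleton_apply]
    rw [h1, map_smul]
  right_inv x := by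
    refine Subtype.ext ?_
    simp only [Submodule.liftQ_apply, LinearMap.toSpanSingleton_apply, one_smul]

variable [IsDedekindDomain R] (p : Ideal R)

lemma torsion_ne (hp : p.IsMaximal) (n : ℕ) (q : Ideal R) (hq : q.IsMaximal)
    (hne : q ≠ p) (l : ℕ) :
    Submodule.torsionBySet R (R ⧸ (p ^ n : Ideal R)) ((q ^ l : Ideal R) : Set R) = ⊥ := by
  have hcop : (q ^ l : Ideal R) ⊔ (p ^ n : Ideal R) = ⊤ :=
    ((Ideal.isCoprime_iff_sup_eq.mpr (hq.coprime_of_ne hp hne)).pow).sup_eq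
  have hone : (1 : R) ∈ (q ^ l : Ideal R) ⊔ (p ^ n : Ideal R) := by
    rw [hcop]; trivial
  obtain ⟨a, ha, b, hb, hab⟩ := Submodule.mem_sup.mp hone
  rw [eq_bot_iff]
  intro x hx
  obtain ⟨r, rfl⟩ := Submodule.Quotient.mk_surjective _ x
  have h1 : a • (Submodule.Quotient.mk r : R ⧸ (p ^ n : Ideal R)) = 0 :=
    (Submodule.mem_torsionBySet_iff _ _).mp hx ⟨a, ha⟩
  have h2 : b • (Submodule.Quotient.mk r : R ⧸ (p ^ n : Ideal R)) = 0 := by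
    have : b • (Submodule.Quotient.mk r : R ⧸ (p ^ n : Ideal R))
        = Submodule.Quotient.mk (b • r) := rfl
    rw [this, Submodule.Quotient.mk_eq_zero]
    exact Ideal.mul_mem_right r _ hb
  have h3 : (Submodule.Quotient.mk r : R ⧸ (p ^ n : Ideal R))
      = (a + b) • Submodule.Quotient.mk r := by rw [hab, one_smul]
  rw [h3, add_smul, h1, h2, add_zero]
  exact Submodule.zero_mem ⊥

lemma torsion_eq (hp : p.IsMaximal) (hp0 : p ≠ ⊥) (n l : ℕ) :
    Submodule.torsionBySet R (R ⧸ (p ^ n : Ideal R)) ((p ^ l : Ideal R) : Set R)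
      = Submodule.map (p ^ n : Ideal R).mkQ (p ^ (n - min l n) : Ideal R) := by
  apply le_antisymm
  · intro x hx
    obtain ⟨r, rfl⟩ := Submodule.Quotient.mk_surjective _ x
    rcases le_or_gt n l with hln | hnl
    · have hmin : (p : Ideal R) ^ (n - min l n) = ⊤ := by
        rw [min_eq_right hln, Nat.sub_self, pow_zero, Ideal.one_eq_top]
      rw [hmin, Submodule.map_top, Submodule.range_mkQ]
      trivial
    · have hml : min l n = l := min_eq_left hnl.le
      have hmul : (p ^ l : Ideal R) * Ideal.span {r} ≤ p ^ n := by
        rw [Ideal.mul_le]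
        intro a ha s hs
        obtain ⟨d, rfl⟩ := Ideal.mem_span_singleton'.mp hs
        have har : a * r ∈ (p ^ n : Ideal R) := by
          have h1 : a • (Submodule.Quotient.mk r : R ⧸ (p ^ n : Ideal R)) = 0 :=
            (Submodule.mem_torsionBySet_iff _ _).mp hx ⟨a, ha⟩
          have h2 : a • (Submodule.Quotient.mk r : R ⧸ (p ^ n : Ideal R))
              = Submodule.Quotient.mk (a * r) := rfl
          rwa [h2, Submodule.Quotient.mk_eq_zero] at h1
        have : a * (d * r) = d * (a * r) := by ring
        rw [this]
        exact Ideal.mul_mem_left _ _ har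
      have hdvd : (p ^ n : Ideal R) ∣ (p ^ l : Ideal R) * Ideal.span {r} :=
        Ideal.dvd_iff_le.mpr hmul
      have hsplit : (p ^ n : Ideal R) = p ^ l * p ^ (n - l) := by
        rw [← pow_add]; congr 1; omega
      rw [hsplit] at hdvd
      have hcancel : (p ^ (n - l) : Ideal R) ∣ Ideal.span {r} := by
        have hne : (p ^ l : Ideal R) ≠ 0 := pow_ne_zero l (by
          rw [Ideal.zero_eq_bot]; exact hp0)
        exact (mul_dvd_mul_iff_left hne).mp hdvd
      have hr : r ∈ (p ^ (n - l) : Ideal R) :=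
        (Ideal.span_singleton_le_iff_mem _).mp (Ideal.dvd_iff_le.mp hcancel)
      rw [hml]
      exact ⟨r, hr, rfl⟩
  · rintro x ⟨r, hr, rfl⟩
    refine (Submodule.mem_torsionBySet_iff _ _).mpr fun a => ?_
    have h2 : (a : R) • ((p ^ n : Ideal R).mkQ r : R ⧸ (p ^ n : Ideal R))
        = Submodule.Quotient.mk ((a : R) * r) := rfl
    rw [h2, Submodule.Quotient.mk_eq_zero]
    have hmem : (a : R) * r ∈ (p ^ l : Ideal R) * (p ^ (n - min l n) : Ideal R) :=
      Ideal.mul_mem_mul a.2 hr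
    have hle : (p ^ l : Ideal R) * (p ^ (n - min l n) : Ideal R) ≤ p ^ n := by
      rw [← pow_add]
      exact Ideal.pow_le_pow_right (by omega)
    exact hle hmem

open Classical in
lemma length_hom_cyclic (hp : p.IsMaximal) (hp0 : p ≠ ⊥) (n : ℕ)
    (q : Ideal R) (hq : q.IsMaximal) (l : ℕ) :
    Module.length' R ((R ⧸ (q ^ l : Ideal R)) →ₗ[R] (R ⧸ (p ^ n : Ideal R)))
      = ((if q = p then min l n else 0 : ℕ) : ℕ∞) := by
  classical
  rw [length_eq_of_equiv (homQuotEquivTorsion (q ^ l) (R ⧸ (p ^ n : Ideal R))),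
    length_submodule_eq_height]
  by_cases hqp : q = p
  · subst hqp
    rw [torsion_eq q hp hp0 n l,
      height_map_pow q hp0 hp.isPrime hp.ne_top (Nat.sub_le n (min l n))]
    simp only [if_pos rfl]
    congr 1
    exact Nat.sub_sub_self (min_le_right l n)
  · rw [torsion_ne p hp n q hq hqp l]
    simp [hqp]

end Torsion

section Projective

open Order

variable {R : Type*} [CommRing R] [IsDedekindDomain R]

lemma maximal_unique_quot_pow (p : Ideal R) (hp : p.IsMaximal) (n : ℕ) (hn : 1 ≤ n) :
    ∃! I : Ideal (R ⧸ (p ^ n : Ideal R)), I.IsMaximal := by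
  have hsurj : Function.Surjective (Ideal.Quotient.mk (p ^ n : Ideal R)) :=
    Ideal.Quotient.mk_surjective
  have hnt : (p ^ n : Ideal R) ≠ ⊤ := fun h =>
    hp.ne_top (top_le_iff.mp (h ▸ Ideal.pow_le_self (by omega)))
  haveI : Nontrivial (R ⧸ (p ^ n : Ideal R)) :=
    Ideal.Quotient.nontrivial_iff.mpr hnt
  obtain ⟨J0, hJ0⟩ := Ideal.exists_maximal (R ⧸ (p ^ n : Ideal R))
  have hcomap : ∀ J : Ideal (R ⧸ (p ^ n : Ideal R)), J.IsMaximal →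
      Ideal.comap (Ideal.Quotient.mk (p ^ n : Ideal R)) J = p := by
    intro J hJ
    haveI := hJ
    have h1 : (Ideal.comap (Ideal.Quotient.mk (p ^ n : Ideal R)) J).IsMaximal :=
      Ideal.comap_isMaximal_of_surjective _ hsurj
    have h2 : (p ^ n : Ideal R) ≤ Ideal.comap (Ideal.Quotient.mk (p ^ n : Ideal R)) J := by
      intro x hx
      have : Ideal.Quotient.mk (p ^ n : Ideal R) x = 0 := by
        rw [Ideal.Quotient.eq_zero_iff_mem]; exact hx
      show Ideal.Quotient.mk (p ^ n : Ideal R) x ∈ J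
      rw [this]; exact J.zero_mem
    have h3 : p ≤ Ideal.comap (Ideal.Quotient.mk (p ^ n : Ideal R)) J :=
      (Ideal.IsPrime.le_of_pow_le (hP := h1.isPrime) h2)
    exact (hp.eq_of_le h1.ne_top h3).symm
  refine ⟨J0, hJ0, fun J hJ => ?_⟩
  rw [← Ideal.map_comap_of_surjective _ hsurj J, ← Ideal.map_comap_of_surjective _ hsurj J0,
    hcomap J hJ, hcomap J0 hJ0]

lemma isLocalRing_quot_pow (p : Ideal R) (hp : p.IsMaximal) (n : ℕ) (hn : 1 ≤ n) :
    IsLocalRing (R ⧸ (p ^ n : Ideal R)) :=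
  IsLocalRing.of_unique_max_ideal (maximal_unique_quot_pow p hp n hn)

lemma isUnit_mk_of_not_mem (p : Ideal R) (hp : p.IsMaximal) (n : ℕ) (hn : 1 ≤ n)
    {x : R} (hx : x ∉ p) : IsUnit (Ideal.Quotient.mk (p ^ n : Ideal R) x) := by
  haveI := isLocalRing_quot_pow p hp n hn
  by_contra hu
  have hmem : Ideal.Quotient.mk (p ^ n : Ideal R) x
      ∈ IsLocalRing.maximalIdeal (R ⧸ (p ^ n : Ideal R)) :=
    (IsLocalRing.mem_maximalIdeal _).mpr hu
  obtain ⟨J0, hJ0, huniq⟩ := maximal_unique_quot_pow p hp n hn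
  have hJ0max : J0 = IsLocalRing.maximalIdeal (R ⧸ (p ^ n : Ideal R)) :=
    IsLocalRing.eq_maximalIdeal hJ0
  have hcomap : Ideal.comap (Ideal.Quotient.mk (p ^ n : Ideal R))
      (IsLocalRing.maximalIdeal (R ⧸ (p ^ n : Ideal R))) = p := by
    have hmax := IsLocalRing.maximalIdeal.isMaximal (R ⧸ (p ^ n : Ideal R))
    have h1 : (Ideal.comap (Ideal.Quotient.mk (p ^ n : Ideal R))
        (IsLocalRing.maximalIdeal (R ⧸ (p ^ n : Ideal R)))).IsMaximal :=
      Ideal.comap_isMaximal_of_surjective _ Ideal.Quotient.mk_surjective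
    have h2 : (p ^ n : Ideal R) ≤ Ideal.comap (Ideal.Quotient.mk (p ^ n : Ideal R))
        (IsLocalRing.maximalIdeal (R ⧸ (p ^ n : Ideal R))) := by
      intro y hy
      have h0 : Ideal.Quotient.mk (p ^ n : Ideal R) y = 0 := by
        rw [Ideal.Quotient.eq_zero_iff_mem]; exact hy
      rw [Ideal.mem_comap, h0]
      exact Submodule.zero_mem _
    have h3 := Ideal.IsPrime.le_of_pow_le (hP := h1.isPrime) h2
    exact (hp.eq_of_le h1.ne_top h3).symm
  exact hx (hcomap ▸ hmem)

open Classical in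
lemma length_hom_proj (K : Type*) [Field K] [Algebra R K] [IsFractionRing R K]
    (p : Ideal R) (hp : p.IsMaximal) (hp0 : p ≠ ⊥) (n : ℕ) (hn : 1 ≤ n)
    (F : Type*) [AddCommGroup F] [Module R F] [Module.Finite R F] [Module.Projective R F] :
    Module.length' R (F →ₗ[R] (R ⧸ (p ^ n : Ideal R)))
      = ((Module.finrank K (K ⊗[R] F) * n : ℕ) : ℕ∞) := by
  classical
  haveI hpp : p.IsPrime := hp.isPrime
  haveI := isLocalRing_quot_pow p hp n hn
  haveI : Module.FinitePresentation R F := Module.finitePresentation_of_projective R F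
  haveI : Module.FinitePresentation (Localization.AtPrime p)
      (Localization.AtPrime p ⊗[R] F) :=
    FinitePresentation.of_isBaseChange (TensorProduct.mk R (Localization.AtPrime p) F 1)
      (TensorProduct.isBaseChange R F (Localization.AtPrime p))
  haveI : Module.Free (Localization.AtPrime p) (Localization.AtPrime p ⊗[R] F) :=
    Module.free_of_flat_of_isLocalRing
  set ι := Module.Free.ChooseBasisIndex (Localization.AtPrime p)
    (Localization.AtPrime p ⊗[R] F) with hι
  let b : Module.Basis ι (Localization.AtPrime p) (Localization.AtPrime p ⊗[R] F) :=
    Module.Free.chooseBasis _ _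
  -- the fraction field as an algebra over the localization
  have hKunits : ∀ y : p.primeCompl, IsUnit (algebraMap R K y) := fun y => by
    have hy : (y : R) ∉ p := y.2
    refine isUnit_iff_ne_zero.mpr fun h0 => ?_
    have hy0 : (y : R) = 0 := IsFractionRing.injective R K (by rw [h0, map_zero])
    exact hy (hy0 ▸ p.zero_mem)
  letI algK : Algebra (Localization.AtPrime p) K :=
    (IsLocalization.lift (S := Localization.AtPrime p) hKunits).toAlgebra
  haveI : IsScalarTower R (Localization.AtPrime p) K :=
    IsScalarTower.of_algebraMap_eq fun x => (IsLocalization.lift_eq hKunits x).symm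
  let bK : Module.Basis ι K (K ⊗[R] F) :=
    (b.baseChange K).map
      (TensorProduct.AlgebraTensorModule.cancelBaseChange R (Localization.AtPrime p) K K F)
  have hrank : Module.finrank K (K ⊗[R] F) = Fintype.card ι :=
    Module.finrank_eq_card_basis bK
  -- the quotient ring as an algebra over the localization
  have hSunits : ∀ y : p.primeCompl,
      IsUnit (algebraMap R (R ⧸ (p ^ n : Ideal R)) y) := fun y => by
    rw [Ideal.Quotient.algebraMap_eq]
    exact isUnit_mk_of_not_mem p hp n hn y.2
  letI algS : Algebra (Localization.AtPrime p) (R ⧸ (p ^ n : Ideal R)) :=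
    (IsLocalization.lift (S := Localization.AtPrime p) hSunits).toAlgebra
  haveI : IsScalarTower R (Localization.AtPrime p) (R ⧸ (p ^ n : Ideal R)) :=
    IsScalarTower.of_algebraMap_eq fun x => (IsLocalization.lift_eq hSunits x).symm
  let bS : Module.Basis ι (R ⧸ (p ^ n : Ideal R)) ((R ⧸ (p ^ n : Ideal R)) ⊗[R] F) :=
    (b.baseChange (R ⧸ (p ^ n : Ideal R))).map
      (TensorProduct.AlgebraTensorModule.cancelBaseChange R (Localization.AtPrime p)
        (R ⧸ (p ^ n : Ideal R)) (R ⧸ (p ^ n : Ideal R)) F)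
  -- the chain of equivalences
  let e1 : (F →ₗ[R] (R ⧸ (p ^ n : Ideal R))) ≃ₗ[R ⧸ (p ^ n : Ideal R)]
      (((R ⧸ (p ^ n : Ideal R)) ⊗[R] F) →ₗ[R ⧸ (p ^ n : Ideal R)] (R ⧸ (p ^ n : Ideal R))) :=
    LinearMap.liftBaseChangeEquiv _
  let e2 := (bS.constr (R ⧸ (p ^ n : Ideal R)) :
      (ι → R ⧸ (p ^ n : Ideal R)) ≃ₗ[R ⧸ (p ^ n : Ideal R)] _).symm
  let e3 : (F →ₗ[R] (R ⧸ (p ^ n : Ideal R))) ≃ₗ[R] (ι → R ⧸ (p ^ n : Ideal R)) :=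
    (e1.trans e2).restrictScalars R
  rw [length_eq_of_equiv e3]
  let e4 : (ι → R ⧸ (p ^ n : Ideal R)) ≃ₗ[R]
      ((_ : Fin (Fintype.card ι)) → R ⧸ (p ^ n : Ideal R)) :=
    LinearEquiv.piCongrLeft' R (fun _ : ι => R ⧸ (p ^ n : Ideal R)) (Fintype.equivFin ι)
  rw [length_eq_of_equiv e4, length_pi]
  simp only [length_quot_pow p hp0 hpp hp.ne_top n, Finset.sum_const, Finset.card_univ,
    Fintype.card_fin, nsmul_eq_mul, hrank]
  push_cast
  ring
end Projective

end Statement11Aux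

/- **Statement 11.** Let `R` be a Dedekind domain that is not a field with fraction field `K`,
let `p` be a nonzero maximal ideal and `n ≥ 1`. Let `M` be a finitely generated `R`-module with
a decomposition `M ≅ F × ∏_{i ∈ Fin k} R/(q i ^ l i)` where `F` is finitely generated projective,
each `q i` is a nonzero maximal ideal and each `l i ≥ 1`. Then
`length_R Hom_R(M, R/p^n) = n · dim_K (K ⊗ F) + Σ_{i : q i = p} min (l i) n`. -/
open Classical in
theorem statement11 (R : Type*) [CommRing R] [IsDedekindDomain R] (hR : ¬IsField R)
    (K : Type*) [Field K] [Algebra R K] [IsFractionRing R K]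
    (p : Ideal R) (hp : p.IsMaximal) (hp0 : p ≠ ⊥) (n : ℕ) (hn : 1 ≤ n)
    (M : Type*) [AddCommGroup M] [Module R M] [Module.Finite R M]
    (F : Type*) [AddCommGroup F] [Module R F] [Module.Finite R F] [Module.Projective R F]
    (k : ℕ) (q : Fin k → Ideal R) (l : Fin k → ℕ)
    (hq : ∀ i, (q i).IsMaximal) (hq0 : ∀ i, q i ≠ ⊥) (hl : ∀ i, 1 ≤ l i)
    (e : M ≃ₗ[R] F × ((i : Fin k) → R ⧸ (q i ^ l i))) :
    Module.length' R (M →ₗ[R] (R ⧸ p ^ n)) =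
      ((n * Module.finrank K (K ⊗[R] F) +
        ∑ i ∈ Finset.univ.filter (fun i => q i = p), min (l i) n : ℕ) : ℕ∞) := by
  classical
  have e0 : (M →ₗ[R] (R ⧸ p ^ n)) ≃ₗ[R]
      ((F →ₗ[R] (R ⧸ p ^ n)) × (((i : Fin k) → R ⧸ (q i ^ l i)) →ₗ[R] (R ⧸ p ^ n))) :=
    (LinearEquiv.arrowCongr e (LinearEquiv.refl R _)).trans
      (LinearMap.coprodEquiv R).symm
  rw [Statement11Aux.length_eq_of_equiv e0, Statement11Aux.length_prod,
    Statement11Aux.length_eq_of_equiv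
      ((LinearMap.lsum (R := R) (φ := fun i => R ⧸ (q i ^ l i)) (M := R ⧸ (p ^ n : Ideal R)) R).symm),
    Statement11Aux.length_pi,
    Statement11Aux.length_hom_proj K p hp hp0 n hn F]
  have hcyc : ∀ i : Fin k,
      Module.length' R ((R ⧸ (q i ^ l i : Ideal R)) →ₗ[R] (R ⧸ (p ^ n : Ideal R)))
        = ((if q i = p then min (l i) n else 0 : ℕ) : ℕ∞) := fun i =>
    Statement11Aux.length_hom_cyclic p hp hp0 n (q i) (hq i) (l i)
  rw [Finset.sum_congr rfl fun i _ => hcyc i]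
  rw [← Nat.cast_sum]
  rw [← Nat.cast_add]
  congr 1
  rw [mul_comm, Finset.sum_filter]
end
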